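/- arXiv:2306.15744 — 9 statements merged into one kernel-verified Lean document; each statement's English description precedes it below -/
import Mathlib

section
/- For every pair of integers r ≥ 1 and t ≥ 1 there exists an [A_r(t), A_r(A_r(t))]-size-indexing Sperner family with alphabet size 2r; that is, a family of multisets (Q_m) indexed by m ∈ {A_r(t), A_r(t)+1, …, A_r(A_r(t))}, each Q_m having exactly m elements all drawn from {1, …, 2r}, such that no Q_m is a sub-multiset of any other Q_{m'} with m ≠ m'. -/
def A : ℕ → ℕ → ℕ
  | _, 0 => 0
  | _, 1 => 2
  | 0, t + 2 => 2 * (t + 2)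
  | 1, t + 2 => 2 * (t + 2)
  | r + 2, t + 2 => A (r + 1) (A (r + 2) (t + 1))

lemma A_one (r : ℕ) : A r 1 = 2 := by
  match r with
  | 0 => simp [A]
  | 1 => simp [A]
  | r + 2 => simp [A]

lemma A_one_eval (t : ℕ) (ht : 1 ≤ t) : A 1 t = 2 * t := by
  match t, ht with
  | 1, _ => simp [A]
  | t + 2, _ => simp [A]

lemma A_succ_eq (r t : ℕ) (hr : 1 ≤ r) (ht : 2 ≤ t) :
    A (r + 1) t = A r (A (r + 1) (t - 1)) := by
  match r, hr, t, ht with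
  | r + 1, _, t + 2, _ => simp [A]

lemma A_ge : ∀ r t : ℕ, 1 ≤ r → 1 ≤ t → 2 * t ≤ A r t
  | _, 0 => by omega
  | r, 1 => by simp [A_one]
  | 0, _ + 2 => by omega
  | 1, t + 2 => by intro _ _; simp [A]
  | r + 2, t + 2 => by
    intro _ _
    have h1 := A_ge (r + 2) (t + 1) (by omega) (by omega)
    have h2 := A_ge (r + 1) (A (r + 2) (t + 1)) (by omega) (by omega)
    have h3 : A (r + 2) (t + 2) = A (r + 1) (A (r + 2) (t + 1)) := by simp [A]
    omega
termination_by r t => (r, t)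

lemma A_mono (r : ℕ) (hr : 1 ≤ r) {x y : ℕ} (hx : 1 ≤ x) (hxy : x ≤ y) :
    A r x ≤ A r y := by
  induction y with
  | zero => omega
  | succ y ih =>
    rcases Nat.lt_or_ge x (y + 1) with h | h
    · have hy : 1 ≤ y := by omega
      refine le_trans (ih (by omega)) ?_
      match r, hr, y, hy with
      | 1, _, 1, _ => simp [A]
      | 1, _, y + 2, _ => simp [A]
      | r + 2, _, y, hy =>
        have heq : A (r + 2) (y + 1) = A (r + 1) (A (r + 2) y) := by
          match y, hy with
          | y + 1, _ => simp [A]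
        rw [heq]
        have h1 : 2 * y ≤ A (r + 2) y := A_ge _ _ (by omega) hy
        have h2 : 2 * (A (r + 2) y) ≤ A (r + 1) (A (r + 2) y) :=
          A_ge _ _ (by omega) (by omega)
        omega
    · have : x = y + 1 := by omega
      subst this; rfl

lemma A_le_iter (r : ℕ) (hr : 1 ≤ r) (u : ℕ) (hu : 1 ≤ u) :
    A (r + 1) u ≤ (A r)^[u] 1 := by
  induction u with
  | zero => omega
  | succ u ih =>
    rcases Nat.lt_or_ge 1 (u + 1) with h | h
    · have hu' : 1 ≤ u := by omega
      have h1 : A (r + 1) (u + 1) = A r (A (r + 1) u) := by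
        have := A_succ_eq r (u + 1) hr (by omega)
        simpa using this
      rw [h1, Function.iterate_succ_apply']
      exact A_mono r hr (by have := A_ge (r+1) u (by omega) hu'; omega) (ih hu')
    · have : u = 0 := by omega
      subst this
      simp [A_one]

/-- Count-based goodness: correct cards, alphabet bound `k`, and the Sperner
condition in the form: for `m < m'` some letter count strictly decreases. -/
def CGood (k lo hi : ℕ) (Q : ℕ → Multiset ℕ) : Prop :=
  (∀ m ∈ Finset.Icc lo hi, (Q m).card = m ∧ ∀ x ∈ Q m, x ∈ Finset.Icc 1 k) ∧
  (∀ m ∈ Finset.Icc lo hi, ∀ m' ∈ Finset.Icc lo hi, m < m' →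
     ∃ x, (Q m').count x < (Q m).count x)

lemma seg (r : ℕ) (hr : 1 ≤ r)
    (IH : ∀ s, 1 ≤ s → ∃ W : ℕ → Multiset ℕ, CGood (2*r) (A r s) (A r (A r s)) W) :
    ∀ b L s : ℕ, 1 ≤ s → A r s + b ≤ L → L ≤ A r (A r s) + b →
    ∃ Q : ℕ → Multiset ℕ, CGood (2*r+1) L ((A r)^[b+2] s) Q ∧
      ∀ m ∈ Finset.Icc L ((A r)^[b+2] s), (Q m).count (2*r+1) ≤ b := by
  intro b
  induction b with
  | zero =>
    intro L s hs hL1 hL2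
    obtain ⟨W, hWmem, hWsp⟩ := IH s hs
    have htop : (A r)^[2] s = A r (A r s) := by
      simp [Function.iterate_succ_apply']
    refine ⟨W, ⟨?_, ?_⟩, ?_⟩
    · intro m hm
      rw [htop] at hm
      simp only [Finset.mem_Icc] at hm
      have hm' : m ∈ Finset.Icc (A r s) (A r (A r s)) := by
        simp only [Finset.mem_Icc]; omega
      obtain ⟨hc, he⟩ := hWmem m hm'
      exact ⟨hc, fun x hx => by
        have := he x hx
        simp only [Finset.mem_Icc] at this ⊢
        omega⟩
    · intro m hm m' hm' hlt
      rw [htop] at hm hm'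
      simp only [Finset.mem_Icc] at hm hm'
      exact hWsp m (by simp only [Finset.mem_Icc]; omega)
        m' (by simp only [Finset.mem_Icc]; omega) hlt
    · intro m hm
      rw [htop] at hm
      simp only [Finset.mem_Icc] at hm
      have hm' : m ∈ Finset.Icc (A r s) (A r (A r s)) := by
        simp only [Finset.mem_Icc]; omega
      have hnotmem : (2*r+1) ∉ W m := by
        intro hx
        have := (hWmem m hm').2 _ hx
        simp only [Finset.mem_Icc] at this
        omega
      simp [Multiset.count_eq_zero_of_notMem hnotmem]
  | succ b ihb =>
    intro L s hs hL1 hL2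
    obtain ⟨W, hWmem, hWsp⟩ := IH s hs
    have hs2 : 2 * s ≤ A r s := A_ge r s hr hs
    have hs' : 1 ≤ A r s := by omega
    have hAA : 2 * A r s ≤ A r (A r s) := A_ge r _ hr hs'
    have hAA' : 1 ≤ A r (A r s) := by omega
    have hAAA : 2 * A r (A r s) ≤ A r (A r (A r s)) := A_ge r _ hr hAA'
    obtain ⟨Q', hQ'good, hQ'cnt⟩ :=
      ihb (A r (A r s) + b + 2) (A r s) hs' (by omega) (by omega)
    have htop : (A r)^[b+2] (A r s) = (A r)^[b+1+2] s := by
      rw [← Function.iterate_succ_apply]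
    rw [htop] at hQ'good hQ'cnt
    obtain ⟨hQ'mem, hQ'sp⟩ := hQ'good
    set cut := A r (A r s) + (b + 1) with hcut
    set Q : ℕ → Multiset ℕ := fun m =>
      if m ≤ cut then W (m - (b+1)) + Multiset.replicate (b+1) (2*r+1) else Q' m
      with hQdef
    have hWm : ∀ m, L ≤ m → m ≤ cut →
        (m - (b+1)) ∈ Finset.Icc (A r s) (A r (A r s)) ∧
        (Q m).card = m ∧ (∀ x ∈ Q m, x ∈ Finset.Icc 1 (2*r+1)) ∧
        (Q m).count (2*r+1) = b + 1 := by
      intro m hmL hmc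
      have hmem : (m - (b+1)) ∈ Finset.Icc (A r s) (A r (A r s)) := by
        simp only [Finset.mem_Icc]; omega
      obtain ⟨hc, he⟩ := hWmem _ hmem
      have hQm : Q m = W (m - (b+1)) + Multiset.replicate (b+1) (2*r+1) := by
        simp only [hQdef, if_pos hmc]
      have hnot : (2*r+1) ∉ W (m - (b+1)) := by
        intro hx
        have := he _ hx
        simp only [Finset.mem_Icc] at this
        omega
      refine ⟨hmem, ?_, ?_, ?_⟩
      · rw [hQm]; simp [hc]; omega
      · intro x hx
        rw [hQm] at hx
        rcases Multiset.mem_add.1 hx with h | h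
        · have := he _ h
          simp only [Finset.mem_Icc] at this ⊢
          omega
        · have := Multiset.eq_of_mem_replicate h
          simp only [Finset.mem_Icc]
          omega
      · rw [hQm]
        simp [Multiset.count_eq_zero_of_notMem hnot]
    refine ⟨Q, ⟨?_, ?_⟩, ?_⟩
    · intro m hm
      simp only [Finset.mem_Icc] at hm
      by_cases hmc : m ≤ cut
      · obtain ⟨_, hc, he, _⟩ := hWm m hm.1 hmc
        exact ⟨hc, he⟩
      · have hm' : m ∈ Finset.Icc (A r (A r s) + b + 2) ((A r)^[b+1+2] s) := by
          simp only [Finset.mem_Icc]; omega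
        have hQm : Q m = Q' m := by simp only [hQdef, if_neg hmc]
        rw [hQm]
        exact hQ'mem m hm'
    · intro m hm m' hm' hlt
      simp only [Finset.mem_Icc] at hm hm'
      by_cases h1 : m ≤ cut
      · by_cases h2 : m' ≤ cut
        · -- both in first segment: use W's Sperner property
          obtain ⟨hmem1, _, _, _⟩ := hWm m hm.1 h1
          obtain ⟨hmem2, _, _, _⟩ := hWm m' hm'.1 h2
          obtain ⟨x, hx⟩ := hWsp _ hmem1 _ hmem2 (by omega)
          refine ⟨x, ?_⟩
          simp only [hQdef, if_pos h1, if_pos h2, Multiset.count_add]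
          omega
        · -- m in first, m' in second: letter 2r+1 decreases
          obtain ⟨_, _, _, hcnt⟩ := hWm m hm.1 h1
          have hm'2 : m' ∈ Finset.Icc (A r (A r s) + b + 2) ((A r)^[b+1+2] s) := by
            simp only [Finset.mem_Icc]; omega
          have hQm' : Q m' = Q' m' := by simp only [hQdef, if_neg h2]
          refine ⟨2*r+1, ?_⟩
          rw [hQm', hcnt]
          have := hQ'cnt m' hm'2
          omega
      · by_cases h2 : m' ≤ cut
        · omega
        · have hm1 : m ∈ Finset.Icc (A r (A r s) + b + 2) ((A r)^[b+1+2] s) := by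
            simp only [Finset.mem_Icc]; omega
          have hm2 : m' ∈ Finset.Icc (A r (A r s) + b + 2) ((A r)^[b+1+2] s) := by
            simp only [Finset.mem_Icc]; omega
          obtain ⟨x, hx⟩ := hQ'sp _ hm1 _ hm2 hlt
          refine ⟨x, ?_⟩
          simp only [hQdef, if_neg h1, if_neg h2]
          exact hx
    · intro m hm
      simp only [Finset.mem_Icc] at hm
      by_cases hmc : m ≤ cut
      · obtain ⟨_, _, _, hcnt⟩ := hWm m hm.1 hmc
        omega
      · have hm' : m ∈ Finset.Icc (A r (A r s) + b + 2) ((A r)^[b+1+2] s) := by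
          simp only [Finset.mem_Icc]; omega
        have hQm : Q m = Q' m := by simp only [hQdef, if_neg hmc]
        rw [hQm]
        have := hQ'cnt m hm'
        omega

lemma main_aux : ∀ r, 1 ≤ r → ∀ t, 1 ≤ t →
    ∃ Q : ℕ → Multiset ℕ, CGood (2*r) (A r t) (A r (A r t)) Q := by
  intro r hr
  induction r, hr using Nat.le_induction with
  | base =>
    intro t ht
    have h1 : A 1 t = 2 * t := A_one_eval t ht
    have h2 : A 1 (A 1 t) = 4 * t := by
      rw [h1, A_one_eval (2*t) (by omega)]; ring
    refine ⟨fun m => Multiset.replicate (2*(m - 2*t)) 1 + Multiset.replicate (4*t - m) 2,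
      ?_, ?_⟩
    · intro m hm
      rw [h2, h1, Finset.mem_Icc] at hm
      constructor
      · simp [Multiset.card_replicate]; omega
      · intro x hx
        rcases Multiset.mem_add.1 hx with h | h
        · have := Multiset.eq_of_mem_replicate h
          simp only [Finset.mem_Icc]; omega
        · have := Multiset.eq_of_mem_replicate h
          simp only [Finset.mem_Icc]; omega
    · intro m hm m' hm' hlt
      rw [h2, h1, Finset.mem_Icc] at hm hm'
      refine ⟨2, ?_⟩
      simp [Multiset.count_replicate]
      omega
  | succ r hr ih =>
    intro t ht
    set T := A (r + 1) t with hT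
    have hT2 : 2 ≤ T := by have := A_ge (r+1) t (by omega) ht; omega
    have hseg := seg r hr ih (T - 2) T 1 (by omega)
      (by rw [A_one]; omega)
      (by
        have h4 : 2 * 2 ≤ A r 2 := A_ge r 2 hr (by omega)
        rw [A_one]; omega)
    obtain ⟨Q, ⟨hQmem, hQsp⟩, _⟩ := hseg
    have hTT : T - 2 + 2 = T := by omega
    rw [hTT] at hQmem hQsp
    have hle : A (r + 1) T ≤ (A r)^[T] 1 := A_le_iter r hr T (by omega)
    refine ⟨Q, ?_, ?_⟩
    · intro m hm
      simp only [Finset.mem_Icc] at hm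
      have hm' : m ∈ Finset.Icc T ((A r)^[T] 1) := by
        simp only [Finset.mem_Icc]; omega
      obtain ⟨hc, he⟩ := hQmem m hm'
      exact ⟨hc, fun x hx => by
        have := he x hx
        simp only [Finset.mem_Icc] at this ⊢
        omega⟩
    · intro m hm m' hm' hlt
      simp only [Finset.mem_Icc] at hm hm'
      exact hQsp m (by simp only [Finset.mem_Icc]; omega)
        m' (by simp only [Finset.mem_Icc]; omega) hlt

/-- **Lemma (size-indexing Sperner families, recursive construction).**
For all `r, t ≥ 1` there is an `[A_r(t), A_r(A_r(t))]`-size-indexing Sperner family with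
alphabet size `2r`: a family of multisets `Q m`, for `m` in the interval
`A_r(t) ≤ m ≤ A_r(A_r(t))`, such that `Q m` has exactly `m` elements, all elements lie in
`{1, …, 2r}`, and no `Q m` is a sub-multiset of any other `Q m'` with `m ≠ m'`. -/
theorem sperner_recursive (r t : ℕ) (hr : 1 ≤ r) (ht : 1 ≤ t) :
    ∃ Q : ℕ → Multiset ℕ,
      (∀ m ∈ Finset.Icc (A r t) (A r (A r t)),
        (Q m).card = m ∧ ∀ x ∈ Q m, x ∈ Finset.Icc 1 (2 * r)) ∧
      (∀ m ∈ Finset.Icc (A r t) (A r (A r t)), ∀ m' ∈ Finset.Icc (A r t) (A r (A r t)),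
        m ≠ m' → ¬ Q m ≤ Q m') := by
  obtain ⟨Q, hmem, hsp⟩ := main_aux r hr t ht
  refine ⟨Q, hmem, ?_⟩
  intro m hm m' hm' hne hle
  rcases Nat.lt_or_ge m m' with h | h
  · obtain ⟨x, hx⟩ := hsp m hm m' hm' h
    have := Multiset.le_iff_count.1 hle x
    omega
  · have hmm' : m' < m := by omega
    have h1 := (hmem m hm).1
    have h2 := (hmem m' hm').1
    have := Multiset.card_le_card hle
    omega
end

section
/- For every integer t ≥ 1 there exists a [2, A_t(t)]-size-indexing Sperner family with alphabet size at most 2t²; that is, a family of multisets (Q_m) indexed by m ∈ {2, 3, …, A_t(t)}, each Q_m having exactly m elements all drawn from {1, …, 2t²}, such that no Q_m is a sub-multiset of any other Q_{m'} with m ≠ m'. -/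
def f : ℕ → ℕ → ℕ
  | 0, a => 2 * a
  | r+1, a => f r ((fun x => f r x + 2)^[a - 2] 2)

/-- iterate of `x ↦ f r x + 2`. -/
def it (r k β : ℕ) : ℕ := (fun x => f r x + 2)^[k] β

lemma it_zero (r β : ℕ) : it r 0 β = β := rfl

lemma it_succ (r k β : ℕ) : it r (k+1) β = it r k (f r β + 2) := by
  simp [it, Function.iterate_succ_apply]

lemma f_succ (r a : ℕ) : f (r+1) a = f r (it r (a-2) 2) := rfl

lemma f_ge : ∀ r a, 2 * a ≤ f r a := by
  intro r
  induction r with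
  | zero => intro a; simp [f]
  | succ r ih =>
    have hit : ∀ k β, β + 2 * k ≤ it r k β := by
      intro k
      induction k with
      | zero => intro β; simp [it_zero]
      | succ k ihk =>
        intro β
        rw [it_succ]
        have h1 := ihk (f r β + 2)
        have h2 := ih β
        omega
    intro a
    rw [f_succ]
    have h1 := hit (a-2) 2
    have h2 := ih (it r (a-2) 2)
    omega

lemma it_mono_arg (r k : ℕ) : ∀ x y, x ≤ y → it r k x ≤ it r k y → True := by intros; trivial

lemma f_mono : ∀ r x y, x ≤ y → f r x ≤ f r y := by
  intro r
  induction r with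
  | zero => intro x y h; simp [f]; omega
  | succ r ih =>
    have harg : ∀ k x y, x ≤ y → it r k x ≤ it r k y := by
      intro k
      induction k with
      | zero => intro x y h; simpa [it_zero] using h
      | succ k ihk =>
        intro x y h
        rw [it_succ, it_succ]
        exact ihk _ _ (by have := ih x y h; omega)
    have hit : ∀ k β, β + 2 * k ≤ it r k β := by
      intro k
      induction k with
      | zero => intro β; simp [it_zero]
      | succ k ihk =>
        intro β
        rw [it_succ]
        have h1 := ihk (f r β + 2)
        have h2 := f_ge r β
        omega
    have hiter : ∀ j j' β, j ≤ j' → it r j β ≤ it r j' β := by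
      intro j j' β h
      have : it r j' β = it r j (it r (j' - j) β) := by
        rw [show j' = j + (j' - j) from by omega]
        simp [it, Function.iterate_add_apply]
      rw [this]
      exact harg j _ _ (by have := hit (j' - j) β; omega)
    intro x y h
    rw [f_succ, f_succ]
    exact ih _ _ (hiter _ _ _ (by omega))

lemma two_le_A : ∀ r t, 1 ≤ t → 2 ≤ A r t := by
  intro r
  induction r with
  | zero =>
    intro t ht
    match t with
    | 1 => simp [A]
    | (s+2) => simp [A]
  | succ r ih =>
    match r with
    | 0 =>
      intro t ht
      match t with
      | 1 => simp [A]
      | (s+2) => simp [A]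
    | r+1 =>
      have aux : ∀ s, 2 ≤ A (r+2) (s+1) := by
        intro s
        induction s with
        | zero => simp [A]
        | succ s ihs =>
          show 2 ≤ A (r+2) (s+2)
          rw [show A (r+2) (s+2) = A (r+1) (A (r+2) (s+1)) from by simp [A]]
          exact ih _ (by omega)
      intro t ht
      match t with
      | (s+1) => exact aux s

lemma A_le_f : ∀ r t, 1 ≤ t → A (r+1) t ≤ f r t := by
  intro r
  induction r with
  | zero =>
    intro t ht
    match t with
    | 1 => simp [A, f]
    | (s+2) => simp [A, f]
  | succ r ih =>
    have aux : ∀ s, A (r+2) (s+1) ≤ it r s 2 := by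
      intro s
      induction s with
      | zero => simp [A, it_zero]
      | succ s ihs =>
        rw [show A (r+2) (s+2) = A (r+1) (A (r+2) (s+1)) from by simp [A]]
        have h1 : A (r+1) (A (r+2) (s+1)) ≤ f r (A (r+2) (s+1)) :=
          ih _ (by have := two_le_A (r+2) (s+1) (by omega); omega)
        have h2 : f r (A (r+2) (s+1)) ≤ f r (it r s 2) := f_mono r _ _ ihs
        have h3 : it r (s+1) 2 = it r s (f r 2 + 2) := it_succ r s 2
        have h4 : it r s (f r 2 + 2) = f r (it r s 2) + 2 := by
          simp [it, ← Function.iterate_succ_apply, Function.iterate_succ_apply']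
        omega
    intro t ht
    match t with
    | 1 =>
      rw [show A (r+1+1) 1 = 2 from by simp [A], f_succ]
      have := f_ge r (it r (1-2) 2)
      have := f_ge r 2
      simp [it_zero] at *
      omega
    | (s+2) =>
      rw [show A (r+2) (s+2) = A (r+1) (A (r+2) (s+1)) from by simp [A], f_succ]
      have h1 : A (r+1) (A (r+2) (s+1)) ≤ f r (A (r+2) (s+1)) :=
        ih _ (by have := two_le_A (r+2) (s+1) (by omega); omega)
      have h2 : f r (A (r+2) (s+1)) ≤ f r (it r s 2) := f_mono r _ _ (aux s)
      simpa using le_trans h1 h2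

/-- `Good n a b Q`: for `m ∈ [a,b]`, `Q m` has `m` elements, all in `[1,n]`, and for
`a ≤ m < m' ≤ b` some symbol occurs strictly more often in `Q m` than in `Q m'`. -/
def Good (n a b : ℕ) (Q : ℕ → Multiset ℕ) : Prop :=
  (∀ m, a ≤ m → m ≤ b → (Q m).card = m ∧ ∀ x ∈ Q m, 1 ≤ x ∧ x ≤ n) ∧
  (∀ m m', a ≤ m → m < m' → m' ≤ b → ∃ x, (Q m').count x < (Q m).count x)

lemma base (a : ℕ) (ha : 2 ≤ a) : ∃ Q, Good 2 a (f 0 a) Q := by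
  refine ⟨fun m => Multiset.replicate (2*a - m) 1 + Multiset.replicate (2*(m - a)) 2, ?_, ?_⟩
  · intro m h1 h2
    simp only [f] at h2
    constructor
    · simp only [Multiset.card_add, Multiset.card_replicate]; omega
    · intro x hx
      rcases Multiset.mem_add.1 hx with h | h <;>
        (have := Multiset.eq_of_mem_replicate h; omega)
  · intro m m' h1 h2 h3
    simp only [f] at h3
    refine ⟨1, ?_⟩
    simp only [Multiset.count_add, Multiset.count_replicate]
    norm_num
    omega

lemma glue (r : ℕ)
    (H : ∀ a, 2 ≤ a → ∃ Q, Good (r+2) a (f r a) Q) :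
    ∀ (k c β : ℕ), 2 ≤ β →
      ∃ Q, Good (r+3) (β + c + k) (f r (it r k β) + c) Q ∧
        ∀ m, β + c + k ≤ m → m ≤ f r (it r k β) + c →
          (Q m).count (r+3) ≤ c + k := by
  intro k
  induction k with
  | zero =>
    intro c β hβ
    obtain ⟨h1, h2⟩ := (H β hβ).choose_spec
    set Q' := (H β hβ).choose with hQ'
    have hcnt : ∀ m, β ≤ m → m ≤ f r β → (Q' m).count (r+3) = 0 := by
      intro m hm1 hm2
      rw [Multiset.count_eq_zero]
      intro hmem
      have := (h1 m hm1 hm2).2 _ hmem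
      omega
    refine ⟨fun m => Q' (m - c) + Multiset.replicate c (r+3), ⟨?_, ?_⟩, ?_⟩
    · intro m hm1 hm2
      rw [it_zero] at hm2
      have hb1 : β ≤ m - c := by omega
      have hb2 : m - c ≤ f r β := by omega
      obtain ⟨hc1, hc2⟩ := h1 (m - c) hb1 hb2
      constructor
      · simp only [Multiset.card_add, Multiset.card_replicate, hc1]; omega
      · intro x hx
        rcases Multiset.mem_add.1 hx with h | h
        · have := hc2 x h; omega
        · have := Multiset.eq_of_mem_replicate h; omega
    · intro m m' hm1 hmm hm2
      rw [it_zero] at hm2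
      obtain ⟨x, hx⟩ := h2 (m - c) (m' - c) (by omega) (by omega) (by omega)
      refine ⟨x, ?_⟩
      simp only [Multiset.count_add]
      omega
    · intro m hm1 hm2
      rw [it_zero] at hm2
      simp only [Multiset.count_add, Multiset.count_replicate_self]
      rw [hcnt (m - c) (by omega) (by omega)]
      omega
  | succ k ih =>
    intro c β hβ
    obtain ⟨h1, h2⟩ := (H β hβ).choose_spec
    set Q₁ := (H β hβ).choose with hQ₁
    have hβ' : 2 ≤ f r β + 2 := by omega
    obtain ⟨⟨g1, g2⟩, g3⟩ := (ih c (f r β + 2) hβ').choose_spec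
    set Q₂ := (ih c (f r β + 2) hβ').choose with hQ₂
    have hfβ : 2 * β ≤ f r β := f_ge r β
    have hitE : it r (k+1) β = it r k (f r β + 2) := it_succ r k β
    set E := f r β + c + k + 1 with hE
    have hcnt1 : ∀ m, β ≤ m → m ≤ f r β → (Q₁ m).count (r+3) = 0 := by
      intro m hm1 hm2
      rw [Multiset.count_eq_zero]
      intro hmem
      have := (h1 m hm1 hm2).2 _ hmem
      omega
    refine ⟨fun m => if m ≤ E then Q₁ (m - (c+k+1)) + Multiset.replicate (c+k+1) (r+3)
        else Q₂ m, ⟨?_, ?_⟩, ?_⟩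
    · intro m hm1 hm2
      rw [hitE] at hm2
      by_cases hmE : m ≤ E
      · simp only [if_pos hmE]
        obtain ⟨hc1, hc2⟩ := h1 (m - (c+k+1)) (by omega) (by omega)
        constructor
        · simp only [Multiset.card_add, Multiset.card_replicate, hc1]; omega
        · intro x hx
          rcases Multiset.mem_add.1 hx with h | h
          · have := hc2 x h; omega
          · have := Multiset.eq_of_mem_replicate h; omega
      · simp only [if_neg hmE]
        obtain ⟨hc1, hc2⟩ := g1 m (by omega) hm2
        exact ⟨hc1, fun x hx => by have := hc2 x hx; omega⟩
    · intro m m' hm1 hmm hm2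
      rw [hitE] at hm2
      by_cases hmE : m ≤ E
      · by_cases hmE' : m' ≤ E
        · simp only [if_pos hmE, if_pos hmE']
          obtain ⟨x, hx⟩ := h2 (m - (c+k+1)) (m' - (c+k+1)) (by omega) (by omega) (by omega)
          refine ⟨x, ?_⟩
          simp only [Multiset.count_add]
          omega
        · simp only [if_pos hmE, if_neg hmE']
          refine ⟨r+3, ?_⟩
          have hcm : (Q₁ (m - (c+k+1)) + Multiset.replicate (c+k+1) (r+3)).count (r+3)
              = c + k + 1 := by
            simp only [Multiset.count_add, Multiset.count_replicate_self]
            rw [hcnt1 (m - (c+k+1)) (by omega) (by omega)]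
            omega
          have hcm' := g3 m' (by omega) hm2
          omega
      · by_cases hmE' : m' ≤ E
        · omega
        · simp only [if_neg hmE, if_neg hmE']
          exact g2 m m' (by omega) hmm hm2
    · intro m hm1 hm2
      rw [hitE] at hm2
      by_cases hmE : m ≤ E
      · simp only [if_pos hmE]
        simp only [Multiset.count_add, Multiset.count_replicate_self]
        rw [hcnt1 (m - (c+k+1)) (by omega) (by omega)]
        omega
      · simp only [if_neg hmE]
        have := g3 m (by omega) hm2
        omega

lemma claim : ∀ r a, 2 ≤ a → ∃ Q, Good (r+2) a (f r a) Q := by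
  intro r
  induction r with
  | zero => exact base
  | succ r ih =>
    intro a ha
    obtain ⟨Q, hQ, _⟩ := glue r ih (a-2) 0 2 (le_refl 2)
    have e1 : 2 + 0 + (a-2) = a := by omega
    have e2 : f r (it r (a-2) 2) + 0 = f (r+1) a := by rw [f_succ]; omega
    rw [e1, e2] at hQ
    exact ⟨Q, hQ⟩


/-- **Theorem.** For every `t ≥ 1` there is a `[2, A_t(t)]`-size-indexing Sperner family with
alphabet size at most `2t²`: a family of multisets `Q m` for `2 ≤ m ≤ A_t(t)`, such that `Q m`
has exactly `m` elements, all elements lie in `{1, …, 2t²}`, and no `Q m` is a sub-multiset of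
any other `Q m'` with `m ≠ m'`. -/
theorem sperner_up_to_ackermann (t : ℕ) (ht : 1 ≤ t) :
    ∃ Q : ℕ → Multiset ℕ,
      (∀ m ∈ Finset.Icc 2 (A t t),
        (Q m).card = m ∧ ∀ x ∈ Q m, x ∈ Finset.Icc 1 (2 * t ^ 2)) ∧
      (∀ m ∈ Finset.Icc 2 (A t t), ∀ m' ∈ Finset.Icc 2 (A t t),
        m ≠ m' → ¬ Q m ≤ Q m') := by
  obtain ⟨Q', hc, hi⟩ := claim (t-1) (max t 2) (le_max_right _ _)
  have htsq : t ≤ t ^ 2 := Nat.le_self_pow (by norm_num) t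
  have hA : A t t ≤ f (t-1) (max t 2) := by
    have h1 : A t t ≤ f (t-1) t := by
      have h := A_le_f (t-1) t ht
      rwa [show t - 1 + 1 = t from by omega] at h
    exact le_trans h1 (f_mono _ _ _ (le_max_left _ _))
  set F : ℕ → Multiset ℕ :=
    fun m => if m < t then Multiset.replicate m (t + m) else Q' m with hF
  have key1 : ∀ m, 2 ≤ m → m ≤ A t t →
      (F m).card = m ∧ ∀ x ∈ F m, x ∈ Finset.Icc 1 (2 * t ^ 2) := by
    intro m h2m hmA
    by_cases h : m < t
    · simp only [hF, if_pos h]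
      refine ⟨by simp, fun x hx => ?_⟩
      have hx' := Multiset.eq_of_mem_replicate hx
      rw [Finset.mem_Icc]
      omega
    · simp only [hF, if_neg h]
      push_neg at h
      obtain ⟨hc1, hc2⟩ := hc m (max_le h h2m) (le_trans hmA hA)
      refine ⟨hc1, fun x hx => ?_⟩
      obtain ⟨hx1, hx2⟩ := hc2 x hx
      rw [Finset.mem_Icc]
      omega
  have key2 : ∀ m m', 2 ≤ m → m < m' → m' ≤ A t t →
      ∃ x, (F m').count x < (F m).count x := by
    intro m m' h2m hmm hmA
    by_cases h : m < t
    · refine ⟨t + m, ?_⟩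
      have hcm : (F m).count (t + m) = m := by
        simp [hF, if_pos h, Multiset.count_replicate_self]
      have hcm' : (F m').count (t + m) = 0 := by
        by_cases h' : m' < t
        · simp [hF, if_pos h', Multiset.count_replicate]
          omega
        · simp only [hF, if_neg h']
          push_neg at h'
          rw [Multiset.count_eq_zero]
          intro hmem
          have := (hc m' (max_le h' (by omega)) (le_trans hmA hA)).2 _ hmem
          omega
      omega
    · push_neg at h
      have h' : ¬ m' < t := by omega
      obtain ⟨x, hx⟩ := hi m m' (max_le h h2m) hmm (le_trans hmA hA)
      refine ⟨x, ?_⟩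
      simpa [hF, if_neg (show ¬ m < t from by omega), if_neg h'] using hx
  refine ⟨F, fun m hm => key1 m (Finset.mem_Icc.1 hm).1 (Finset.mem_Icc.1 hm).2, ?_⟩
  intro m hm m' hm' hne hle
  rw [Finset.mem_Icc] at hm hm'
  rcases lt_or_gt_of_ne hne with h | h
  · obtain ⟨x, hx⟩ := key2 m m' hm.1 h hm'.2
    exact absurd (Multiset.le_iff_count.1 hle x) (by omega)
  · have hcard := Multiset.card_le_card hle
    rw [(key1 m hm.1 hm.2).1, (key1 m' hm'.1 hm'.2).1] at hcard
    omega
end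

section
/- There is no ticketed learning–unlearning scheme for the Count-to-Zero problem with constant space complexity: for every pair of fixed constants c_s, c_t ∈ ℕ, there is no pair (Learn, Unlearn) valid for datasets of all sizes m ∈ ℕ in which the auxiliary information lies in {0,1}^{c_s} and every ticket lies in {0,1}^{c_t}, and which for every m and every I ⊆ [m] correctly returns ⊥ when I = [m] and ⊤ when I ⊊ [m]. -/
/-- If a multiset `s` is a sub-multiset of the image `t.map f`, then `s` is the image of
some sub-multiset of `t`. -/
lemma exists_le_map_eq {α β : Type*} [DecidableEq α] {f : α → β} :
    ∀ (s : Multiset β) (t : Multiset α), s ≤ t.map f → ∃ u ≤ t, u.map f = s := by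
  intro s
  induction s using Multiset.induction with
  | empty => intro t _; exact ⟨0, Multiset.zero_le t, rfl⟩
  | cons b s ih =>
    intro t h
    have hb : b ∈ t.map f := Multiset.mem_of_le h (Multiset.mem_cons_self b s)
    obtain ⟨a, ha, rfl⟩ := Multiset.mem_map.mp hb
    obtain ⟨t', rfl⟩ := Multiset.exists_cons_of_mem ha
    rw [Multiset.map_cons, Multiset.cons_le_cons_iff] at h
    obtain ⟨u, hu, hmap⟩ := ih t' h
    exact ⟨a ::ₘ u, Multiset.cons_le_cons a hu, by rw [Multiset.map_cons, hmap]⟩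

/-- **Theorem (no constant-space TiLU scheme for Count-to-Zero).** For every pair of fixed
constants `c_s, c_t`, there is no ticketed learning–unlearning scheme for Count-to-Zero,
valid for datasets of every size `m`, in which the auxiliary information is a `c_s`-bit
string and every ticket is a `c_t`-bit string: no assignment of auxiliary strings `aux m`
and tickets `tk m 1, …, tk m m`, together with an unlearning map from (multiset of presented
tickets, auxiliary string) to `{⊥, ⊤}`, can return `⊥` (`false`) whenever the request is
`I = [m]` and `⊤` (`true`) whenever `I ⊊ [m]`. -/
theorem no_constant_space_ctz (cs ct : ℕ) :
    ¬ ∃ (aux : ℕ → Fin cs → Bool) (tk : (m : ℕ) → Fin m → Fin ct → Bool)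
        (Unlearn : Multiset (Fin ct → Bool) → (Fin cs → Bool) → Bool),
        ∀ (m : ℕ) (I : Finset (Fin m)),
          Unlearn (I.val.map (tk m)) (aux m) =
            if I = (Finset.univ : Finset (Fin m)) then false else true := by
  rintro ⟨aux, tk, Unlearn, h⟩
  -- the multiset of all tickets for dataset size `m`
  set T : (m : ℕ) → Multiset (Fin ct → Bool) :=
    fun m => (Finset.univ : Finset (Fin m)).val.map (tk m) with hT
  -- encode ticket counts together with the auxiliary string as a function into ℕ
  set F : ℕ → ((Fin ct → Bool) ⊕ (Fin cs → Bool)) → ℕ :=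
    fun m => Sum.elim (fun t => (T m).count t) (fun b => if aux m = b then 1 else 0) with hF
  -- Dickson's lemma (pi types over a finite index are PWO)
  have hpwo : (Set.univ : Set (((Fin ct → Bool) ⊕ (Fin cs → Bool)) → ℕ)).IsPWO :=
    Set.isPWO_of_wellQuasiOrderedLE Set.univ
  obtain ⟨m, n, hmn, hle⟩ := wellQuasiOrdered_le F
  -- the auxiliary strings agree
  have haux : aux n = aux m := by
    by_contra hne
    have h0 := hle (Sum.inr (aux m))
    rw [hF] at h0
    simp only [Sum.elim_inr, if_pos rfl, if_neg hne] at h0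
    simp at h0
  -- the ticket multiset of size `m` embeds into that of size `n`
  have hTle : T m ≤ T n := Multiset.le_iff_count.mpr fun t => hle (Sum.inl t)
  -- extract a sub-multiset of indices realizing `T m`
  obtain ⟨u, hu, humap⟩ := exists_le_map_eq (T m) (Finset.univ : Finset (Fin n)).val hTle
  have hnodup : u.Nodup := Multiset.nodup_of_le hu (Finset.univ : Finset (Fin n)).nodup
  set I : Finset (Fin n) := ⟨u, hnodup⟩ with hI
  have hcardT : Multiset.card (T m) = m := by
    simp [hT]
  have hcardI : I.card = m := by
    have : Multiset.card (u.map (tk n)) = m := by rw [humap, hcardT]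
    simp at this
    exact this
  have hIne : I ≠ (Finset.univ : Finset (Fin n)) := by
    intro heq
    rw [heq, Finset.card_univ, Fintype.card_fin] at hcardI
    omega
  have h1 := h n I
  rw [if_neg hIne] at h1
  have h2 := h m (Finset.univ : Finset (Fin m))
  rw [if_pos rfl] at h2
  have hIval : I.val.map (tk n) = T m := humap
  rw [hIval, haux] at h1
  have h2' : Unlearn (T m) (aux m) = false := h2
  rw [h1] at h2'
  exact Bool.noConfusion h2'
end

section
/- For any non-trivial concept class H (i.e., H contains at least two distinct hypotheses), if there exists a ticketed learning–unlearning scheme for H with space complexity (C_s, C_t), valid for H-realizable datasets of all sizes, then there also exists a ticketed learning–unlearning scheme for the Count-to-Zero problem with the same space complexity (C_s, C_t). -/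
/-- Empirical loss of hypothesis `h` on dataset `S` (sum of 0-1 losses). -/
def empLoss {X : Type} (h : X → Bool) (S : List (X × Bool)) : ℕ :=
  (S.map fun z => if h z.1 = z.2 then 0 else 1).sum

/-- A dataset is `H`-realizable if some hypothesis in `H` has zero empirical loss on it. -/
def IsRealizable {X : Type} (H : Set (X → Bool)) (S : List (X × Bool)) : Prop :=
  ∃ h ∈ H, empLoss h S = 0

/-- The set of empirical risk minimizers in `H` on the dataset `S`. -/
def ERM {X : Type} (H : Set (X → Bool)) (S : List (X × Bool)) : Set (X → Bool) :=
  {h | h ∈ H ∧ ∀ g ∈ H, empLoss h S ≤ empLoss g S}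

/-- The surviving dataset `S ∖ S_I`: the examples of `S` at indices outside `I`,
kept in their original order. -/
def surviving {Z : Type} (S : List Z) (I : Finset (Fin S.length)) : List Z :=
  ((List.finRange S.length).filter fun i => decide (i ∉ I)).map S.get

/-- The unlearning request together with its tickets: the multiset of (example, ticket)
pairs over the indices in `I`. -/
def removedPairs {Z T : Type} (S : List Z) (tk : Fin S.length → T)
    (I : Finset (Fin S.length)) : Multiset (Z × T) :=
  I.val.map fun i => (S.get i, tk i)

/-- **Lemma (reduction from any non-trivial class to Count-to-Zero).** Let `H` be a
non-trivial concept class (it contains two distinct hypotheses `h₁ ≠ h₂`). If there is a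
ticketed learning–unlearning scheme `(Learn, Unlearn)` for `H` with `c_s`-bit auxiliary
information and `c_t`-bit tickets, valid for all `H`-realizable datasets, then there is a
ticketed learning–unlearning scheme for the Count-to-Zero problem with the same space
complexity `(c_s, c_t)`. -/
theorem tilu_to_ctz {X : Type} [Fintype X] [DecidableEq X]
    (H : Set (X → Bool)) (h₁ h₂ : X → Bool)
    (h₁H : h₁ ∈ H) (h₂H : h₂ ∈ H) (hne : h₁ ≠ h₂)
    (cs ct : ℕ)
    (Learn : (S : List (X × Bool)) →
      (X → Bool) × (Fin cs → Bool) × (Fin S.length → Fin ct → Bool))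
    (Unlearn : Multiset ((X × Bool) × (Fin ct → Bool)) → (Fin cs → Bool) → (X → Bool))
    (hERM : ∀ S, IsRealizable H S → (Learn S).1 ∈ ERM H S)
    (hUn : ∀ S, IsRealizable H S → ∀ I : Finset (Fin S.length),
      Unlearn (removedPairs S (Learn S).2.2 I) (Learn S).2.1 = (Learn (surviving S I)).1) :
    ∃ (CtzLearn : (m : ℕ) → (Fin cs → Bool) × (Fin m → Fin ct → Bool))
      (CtzUnlearn : Multiset (Fin ct → Bool) → (Fin cs → Bool) → Bool),
      ∀ (m : ℕ) (I : Finset (Fin m)),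
        CtzUnlearn (I.val.map (CtzLearn m).2) (CtzLearn m).1 =
          if I = (Finset.univ : Finset (Fin m)) then false else true := by
  classical
  obtain ⟨x₀, hx₀⟩ := Function.ne_iff.mp hne
  set b : Bool := !((Learn []).1 x₀) with hbdef
  have hbr : ∃ h ∈ H, h x₀ = b := by
    by_cases hc : h₁ x₀ = b
    · exact ⟨h₁, h₁H, hc⟩
    · refine ⟨h₂, h₂H, ?_⟩
      cases hbv : b <;> cases h2v : h₂ x₀ <;> cases h1v : h₁ x₀ <;> simp_all
  obtain ⟨hb, hbH, hbx⟩ := hbr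
  have hreal : ∀ L : List (X × Bool), (∀ z ∈ L, z = (x₀, b)) → IsRealizable H L := by
    intro L hall
    refine ⟨hb, hbH, ?_⟩
    unfold empLoss
    apply List.sum_eq_zero
    intro n hn
    simp only [List.mem_map] at hn
    obtain ⟨z, hz, rfl⟩ := hn
    rw [hall z hz]
    simp [hbx]
  have key : ∀ L : List (X × Bool), (∀ z ∈ L, z = (x₀, b)) → L ≠ [] →
      (Learn L).1 x₀ = b := by
    intro L hall hLne
    have hr := hreal L hall
    have herm := hERM L hr
    obtain ⟨h', h'H, h'0⟩ := hr
    have hle := herm.2 h' h'H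
    rw [h'0] at hle
    have hzero : empLoss (Learn L).1 L = 0 := Nat.le_zero.mp hle
    obtain ⟨z, hz⟩ := List.exists_mem_of_ne_nil L hLne
    have h0 : (if (Learn L).1 z.1 = z.2 then 0 else 1) = 0 := by
      refine List.sum_eq_zero_iff.mp hzero _ ?_
      exact List.mem_map_of_mem hz
    rw [hall z hz] at h0
    simpa using h0
  set S : ℕ → List (X × Bool) := fun m => List.replicate m (x₀, b) with hSdef
  have eS : ∀ m, (S m).length = m := fun m => List.length_replicate
  refine ⟨fun m => ((Learn (S m)).2.1, fun i => (Learn (S m)).2.2 (Fin.cast (eS m).symm i)),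
    fun tks aux => decide ((Unlearn (tks.map fun t => ((x₀, b), t)) aux) x₀ = b), ?_⟩
  intro m I
  set I' : Finset (Fin (S m).length) := I.map (finCongr (eS m).symm).toEmbedding with hI'def
  have hSr : IsRealizable H (S m) := hreal _ (by
    intro z hz; exact List.eq_of_mem_replicate hz)
  have hmap : ((I.val.map fun i => (Learn (S m)).2.2 (Fin.cast (eS m).symm i)).map
      fun t => ((x₀, b), t)) = removedPairs (S m) (Learn (S m)).2.2 I' := by
    simp only [removedPairs, hI'def, Finset.map_val, Multiset.map_map]
    apply Multiset.map_congr rfl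
    intro i _
    simp [Function.comp, hSdef, List.getElem_replicate, finCongr]
  simp only [hmap, hUn (S m) hSr I']
  have hsurv_all : ∀ z ∈ surviving (S m) I', z = (x₀, b) := by
    intro z hz
    simp only [surviving, List.mem_map] at hz
    obtain ⟨i, _, rfl⟩ := hz
    exact List.eq_of_mem_replicate (List.get_mem (S m) i)
  by_cases hIu : I = Finset.univ
  · have hI'u : I' = Finset.univ := by
      subst hIu
      rw [hI'def]
      ext j
      simp
    have hsnil : surviving (S m) I' = [] := by
      rw [hI'u]
      simp [surviving]
    rw [hsnil, if_pos hIu]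
    have : (Learn ([] : List (X × Bool))).1 x₀ = !b := by
      rw [hbdef]; simp
    simp [this]
  · have hI'u : I' ≠ Finset.univ := by
      intro hc
      apply hIu
      ext j
      have : (finCongr (eS m).symm) j ∈ I' := hc ▸ Finset.mem_univ _
      rw [hI'def] at this
      simp only [Finset.mem_map, Equiv.coe_toEmbedding] at this
      obtain ⟨i, hi, hij⟩ := this
      have : i = j := (finCongr (eS m).symm).injective hij
      subst this
      simp [hi]
    obtain ⟨j, hj⟩ : ∃ j, j ∉ I' := by
      by_contra hc
      push_neg at hc
      exact hI'u (Finset.eq_univ_iff_forall.mpr hc)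
    have hsne : surviving (S m) I' ≠ [] := by
      unfold surviving
      rw [Ne, List.map_eq_nil_iff]
      intro hc
      have : j ∈ ((List.finRange (S m).length).filter fun i => decide (i ∉ I')) :=
        List.mem_filter.mpr ⟨List.mem_finRange j, by simpa using hj⟩
      rw [hc] at this
      exact List.not_mem_nil this
    rw [if_neg hIu]
    simp [key _ hsurv_all hsne]
end

section
/- For any non-trivial concept class H (i.e., H contains at least two distinct hypotheses), there does not exist a ticketed learning–unlearning scheme for H with constant space complexity: for every pair of fixed constants c_s, c_t ∈ ℕ, there is no pair (Learn, Unlearn), valid for H-realizable datasets of all sizes n, in which the auxiliary information lies in {0,1}^{c_s} and every ticket lies in {0,1}^{c_t}. -/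
lemma exists_le_map {α β : Type*} [DecidableEq α] [DecidableEq β] (f : α → β) :
    ∀ (s : Multiset β) (t : Multiset α), s ≤ t.map f → ∃ u ≤ t, u.map f = s := by
  intro s
  refine Multiset.induction_on s ?_ ?_
  · intro t _; exact ⟨0, Multiset.zero_le t, rfl⟩
  · intro a s ih t hle
    have ha : a ∈ t.map f := Multiset.mem_of_le hle (Multiset.mem_cons_self a s)
    obtain ⟨x, hx, hfx⟩ := Multiset.mem_map.mp ha
    have ht : t.map f = a ::ₘ (t.erase x).map f := by
      rw [← hfx, ← Multiset.map_cons, Multiset.cons_erase hx]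
    have hs : s ≤ (t.erase x).map f := by
      have := Multiset.erase_le_erase a hle
      rwa [Multiset.erase_cons_head, ht, Multiset.erase_cons_head] at this
    obtain ⟨u, hu, hum⟩ := ih (t.erase x) hs
    refine ⟨x ::ₘ u, ?_, by rw [Multiset.map_cons, hum, hfx]⟩
    calc x ::ₘ u ≤ x ::ₘ t.erase x := Multiset.cons_le_cons x hu
    _ = t := Multiset.cons_erase hx

lemma empLoss_replicate {X : Type} (h : X → Bool) (n : ℕ) (x : X) (b : Bool) :
    empLoss h (List.replicate n (x, b)) = n * (if h x = b then 0 else 1) := by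
  simp [empLoss, List.map_replicate, List.sum_replicate, smul_eq_mul]


/-- **Theorem (no constant-space TiLU scheme for any non-trivial class).** Let `H` be a
non-trivial concept class (it contains two distinct hypotheses `h₁ ≠ h₂`). Then for every
pair of fixed constants `c_s, c_t`, there is no ticketed learning–unlearning scheme
`(Learn, Unlearn)` for `H`, valid for `H`-realizable datasets of all sizes, whose auxiliary
information lies in `{0,1}^{c_s}` and whose tickets lie in `{0,1}^{c_t}`. -/
theorem no_constant_space_tilu {X : Type} [Fintype X] [DecidableEq X]
    (H : Set (X → Bool)) (h₁ h₂ : X → Bool)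
    (h₁H : h₁ ∈ H) (h₂H : h₂ ∈ H) (hne : h₁ ≠ h₂)
    (cs ct : ℕ) :
    ¬ ∃ (Learn : (S : List (X × Bool)) →
          (X → Bool) × (Fin cs → Bool) × (Fin S.length → Fin ct → Bool))
        (Unlearn : Multiset ((X × Bool) × (Fin ct → Bool)) → (Fin cs → Bool) → (X → Bool)),
        (∀ S, IsRealizable H S → (Learn S).1 ∈ ERM H S) ∧
        (∀ S, IsRealizable H S → ∀ I : Finset (Fin S.length),
          Unlearn (removedPairs S (Learn S).2.2 I) (Learn S).2.1 =
            (Learn (surviving S I)).1) := by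
  rintro ⟨Learn, Unlearn, hL, hU⟩
  obtain ⟨x, hx⟩ : ∃ x, h₁ x ≠ h₂ x := by
    by_contra h; push_neg at h; exact hne (funext h)
  set h₀ := (Learn []).1 with hh₀
  set b := !(h₀ x) with hb
  obtain ⟨hstar, hstarH, hstarx⟩ : ∃ h ∈ H, h x = b := by
    by_cases h1b : h₁ x = b
    · exact ⟨h₁, h₁H, h1b⟩
    · refine ⟨h₂, h₂H, ?_⟩
      cases hb1 : h₁ x <;> cases hb2 : h₂ x <;> simp_all
  set S : ℕ → List (X × Bool) := fun n => List.replicate n (x, b) with hS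
  have hreal : ∀ n, IsRealizable H (S n) :=
    fun n => ⟨hstar, hstarH, by simp [hS, empLoss_replicate, hstarx]⟩
  have hval : ∀ n, 0 < n → (Learn (S n)).1 x = b := by
    intro n hn
    obtain ⟨hmem, hmin⟩ := hL (S n) (hreal n)
    have h0 : empLoss (Learn (S n)).1 (S n) = 0 :=
      Nat.le_antisymm (by simpa [hS, empLoss_replicate, hstarx] using hmin hstar hstarH)
        (Nat.zero_le _)
    by_contra hc
    simp [hS, empLoss_replicate, hc] at h0
    omega
  set tk : ∀ n, Fin (S n).length → (Fin ct → Bool) := fun n => (Learn (S n)).2.2 with htk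
  set a : ℕ → (Fin cs → Bool) := fun n => (Learn (S n)).2.1 with ha
  set μ : ℕ → Multiset (Fin ct → Bool) :=
    fun n => (Finset.univ : Finset (Fin (S n).length)).val.map (tk n) with hμ
  have hcard : ∀ n, Multiset.card (μ n) = n := by
    intro n; simp [hμ, hS]
  set g : ℕ → ((Fin ct → Bool) ⊕ (Fin cs → Bool)) → ℕ :=
    fun n => Sum.elim (fun t => (μ n).count t) (fun v => if a n = v then 1 else 0) with hg
  obtain ⟨m, n, hmn, hle⟩ := wellQuasiOrdered_le (α := ((Fin ct → Bool) ⊕ (Fin cs → Bool)) → ℕ) g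
  have haux : a n = a m := by
    have h1 := Pi.le_def.mp hle (Sum.inr (a m))
    simp [hg] at h1
    by_contra hc
    simp [hc] at h1
  have hcount : μ m ≤ μ n :=
    Multiset.le_iff_count.mpr (fun t => by simpa [hg] using Pi.le_def.mp hle (Sum.inl t))
  obtain ⟨u, hut, hum⟩ :
      ∃ u ≤ (Finset.univ : Finset (Fin (S n).length)).val, u.map (tk n) = μ m :=
    exists_le_map (tk n) (μ m) _ hcount
  have hnodup : u.Nodup := Multiset.nodup_of_le hut (Finset.univ).nodup
  set I : Finset (Fin (S n).length) := ⟨u, hnodup⟩ with hI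
  have hIcard : I.card = m := by
    have h1 : Multiset.card (u.map (tk n)) = Multiset.card (μ m) := by rw [hum]
    simp [hcard m] at h1; exact h1
  have hget : ∀ k (i : Fin (S k).length), (S k).get i = (x, b) := by
    intro k i; simp [hS]
  have hrem : removedPairs (S n) (tk n) I = removedPairs (S m) (tk m) Finset.univ := by
    unfold removedPairs
    calc I.val.map (fun i => ((S n).get i, tk n i))
        = u.map ((fun t => ((x, b), t)) ∘ (tk n)) :=
          Multiset.map_congr rfl (fun i _ => by rw [hget]; rfl)
      _ = (u.map (tk n)).map (fun t => ((x, b), t)) := (Multiset.map_map _ _ _).symm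
      _ = (μ m).map (fun t => ((x, b), t)) := by rw [hum]
      _ = ((Finset.univ : Finset (Fin (S m).length)).val.map (tk m)).map
            (fun t => ((x, b), t)) := by rw [hμ]
      _ = (Finset.univ : Finset (Fin (S m).length)).val.map
            ((fun t => ((x, b), t)) ∘ (tk m)) := Multiset.map_map _ _ _
      _ = (Finset.univ : Finset (Fin (S m).length)).val.map
            (fun i => ((S m).get i, tk m i)) :=
          (Multiset.map_congr rfl (fun i _ => by rw [hget]; rfl)).symm
  have hsurv_m : surviving (S m) (Finset.univ) = [] := by
    simp [surviving]
  have hsurv_n : surviving (S n) I =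
      List.replicate (surviving (S n) I).length (x, b) := by
    apply List.eq_replicate_length.mpr
    intro z hz
    obtain ⟨i, _, rfl⟩ := List.mem_map.mp hz
    exact hget n i
  have hlenpos : 0 < (surviving (S n) I).length := by
    by_contra h
    have h0 : (surviving (S n) I).length = 0 := Nat.le_zero.mp (not_lt.mp h)
    have hfil : ((List.finRange (S n).length).filter fun i => decide (i ∉ I)) = [] := by
      have h2 : surviving (S n) I = [] := List.length_eq_zero_iff.mp h0
      simpa [surviving, List.map_eq_nil_iff] using h2
    have hsub : (Finset.univ : Finset (Fin (S n).length)) ⊆ I := by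
      intro i _
      by_contra hi
      have h3 := List.filter_eq_nil_iff.mp hfil i (List.mem_finRange i)
      simp [hi] at h3
    have hnm : n ≤ m := by
      calc n = (Finset.univ : Finset (Fin (S n).length)).card := by
              simp [Finset.card_univ, hS]
        _ ≤ I.card := Finset.card_le_card hsub
        _ = m := hIcard
    omega
  have e1 : Unlearn (removedPairs (S m) (tk m) Finset.univ) (a m) =
      (Learn (surviving (S n) I)).1 := by
    rw [← hrem, ← haux]; exact hU (S n) (hreal n) I
  have e2 : Unlearn (removedPairs (S m) (tk m) Finset.univ) (a m) = (Learn []).1 := by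
    rw [← hsurv_m]; exact hU (S m) (hreal m) Finset.univ
  have e1 : (Learn []).1 = (Learn (surviving (S n) I)).1 := e2.symm.trans e1
  have hbx : (Learn (surviving (S n) I)).1 x = b := by
    have h4 := hval (surviving (S n) I).length hlenpos
    have h5 : S (surviving (S n) I).length = surviving (S n) I := by
      exact hsurv_n.symm
    rwa [h5] at h4
  rw [← e1] at hbx
  rw [hb] at hbx
  simp [hh₀] at hbx
end

section
/- For any C-bit mergeable concept class H over a finite domain X, and every dataset size n ≥ 2, there exists a ticketed learning–unlearning scheme for H (valid for H-realizable datasets of size n) with space complexity (C_s = ⌈log₂|H|⌉, C_t = O(C · log n)); concretely, one may take each ticket to have at most ⌈log₂ n⌉ · (C + 1) bits. -/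
/- ============ auxiliary development ============ -/

open scoped Classical

noncomputable section TiLUAux

lemma tilu_bitsum : ∀ (d i : ℕ), i < 2 ^ d →
    (∑ k ∈ Finset.range d, if i.testBit k then 2 ^ k else 0) = i := by
  intro d
  induction d with
  | zero => intro i hi; simp at hi ⊢; omega
  | succ d ih =>
    intro i hi
    rw [Finset.sum_range_succ']
    have h2 : (∑ k ∈ Finset.range d, if i.testBit (k + 1) then 2 ^ (k + 1) else 0)
        = 2 * ∑ k ∈ Finset.range d, if (i / 2).testBit k then 2 ^ k else 0 := by
      rw [Finset.mul_sum]
      refine Finset.sum_congr rfl fun k _ => ?_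
      rw [Nat.testBit_succ]
      split_ifs <;> ring
    have hp : 2 ^ (d + 1) = 2 * 2 ^ d := by ring
    rw [h2, ih (i / 2) (by omega)]
    rw [Nat.testBit_zero]
    rcases Nat.mod_two_eq_zero_or_one i with h | h <;> simp [h] <;> omega

lemma tilu_testbit_inj {m a b : ℕ} (ha : a < 2 ^ m) (hb : b < 2 ^ m)
    (h : ∀ j < m, a.testBit j = b.testBit j) : a = b := by
  apply Nat.eq_of_testBit_eq
  intro j
  by_cases hj : j < m
  · exact h j hj
  · have h1 : a < 2 ^ j := lt_of_lt_of_le ha (Nat.pow_le_pow_right (by norm_num) (by omega))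
    have h2 : b < 2 ^ j := lt_of_lt_of_le hb (Nat.pow_le_pow_right (by norm_num) (by omega))
    rw [Nat.testBit_lt_two_pow h1, Nat.testBit_lt_two_pow h2]

lemma tilu_filter_map_flatten {α β : Type*} (p : α → Bool) (f : α → β) :
    ∀ l : List α, (l.filter p).map f = (l.map fun x => if p x then [f x] else []).flatten := by
  intro l
  induction l with
  | nil => simp
  | cons a l ih => by_cases h : p a <;> simp [List.filter_cons, h, ih]

lemma tilu_flatten_nil {α : Type*} : ∀ (L : List (List α)), (∀ l ∈ L, l = []) → L.flatten = [] := by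
  intro L h
  induction L with
  | nil => rfl
  | cons a L ih =>
    rw [List.flatten_cons, h a (by simp), ih fun l hl => h l (by simp [hl])]
    rfl

lemma tilu_finRange_map_val (n : ℕ) : (List.finRange n).map Fin.val = List.range n := by
  apply List.ext_getElem <;> simp

lemma tilu_pick_flatten {α : Type*} (S : List α) :
    ∀ (t a : ℕ), ((List.range t).map fun j => (S[a + j]?).toList).flatten
      = (S.drop a).take t := by
  intro t
  induction t with
  | zero => simp
  | succ t ih =>
    intro a
    rw [List.range_succ, List.map_append, List.flatten_append, ih, List.take_succ]
    simp [List.getElem?_drop]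

/-- sibling of a block index -/
def sib (b : ℕ) : ℕ := if b % 2 = 0 then b + 1 else b - 1

lemma sib_sib (b : ℕ) : sib (sib b) = b := by
  simp only [sib]; split_ifs <;> omega

lemma sib_left (b : ℕ) : sib (2 * b) = 2 * b + 1 := by
  simp only [sib]; split_ifs <;> omega

lemma sib_right (b : ℕ) : sib (2 * b + 1) = 2 * b := by
  simp only [sib]; split_ifs <;> omega

/-- the `2^k`-length segment of `S` at block index `b` -/
def seg_s10 {α : Type*} (S : List α) (k b : ℕ) : List α := (S.drop (b * 2 ^ k)).take (2 ^ k)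

/-- leaf contribution to the surviving dataset -/
def leafL {X : Type} (S : List X) (I : Finset (Fin S.length)) (i : ℕ) : List X :=
  if h : i < S.length then (if (⟨i, h⟩ : Fin S.length) ∈ I then [] else [S.get ⟨i, h⟩]) else []

/-- piece of the surviving dataset in block `(k, b)` -/
def survSeg {X : Type} (S : List X) (I : Finset (Fin S.length)) (k b : ℕ) : List X :=
  ((List.range (2 ^ k)).map fun j => leafL S I (b * 2 ^ k + j)).flatten

lemma survSeg_split {X : Type} (S : List X) (I : Finset (Fin S.length)) (k b : ℕ) :
    survSeg S I (k + 1) b = survSeg S I k (2 * b) ++ survSeg S I k (2 * b + 1) := by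
  unfold survSeg
  have h2 : 2 ^ (k + 1) = 2 ^ k + 2 ^ k := by ring
  rw [h2, List.range_add, List.map_append, List.flatten_append, List.map_map]
  congr 1
  · refine congrArg _ (List.map_congr_left fun j _ => ?_)
    congr 1; ring
  · refine congrArg _ (List.map_congr_left fun j _ => ?_)
    show leafL S I (b * (2 ^ k + 2 ^ k) + (2 ^ k + j)) = leafL S I ((2 * b + 1) * 2 ^ k + j)
    congr 1; ring

lemma survSeg_mem {X : Type} {S : List X} {I : Finset (Fin S.length)} {k b : ℕ} {z : X}
    (hz : z ∈ survSeg S I k b) : z ∈ S := by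
  simp only [survSeg, List.mem_flatten, List.mem_map] at hz
  obtain ⟨l, ⟨j, _, rfl⟩, hzl⟩ := hz
  unfold leafL at hzl
  split_ifs at hzl with h1 h2 <;> simp at hzl
  subst hzl; exact List.getElem_mem _

lemma survSeg_clean {X : Type} (S : List X) (I : Finset (Fin S.length)) (k b : ℕ)
    (h : ∀ i ∈ I, ¬((i : ℕ) / 2 ^ k = b)) : survSeg S I k b = seg_s10 S k b := by
  have hseg : seg_s10 S k b = ((List.range (2 ^ k)).map fun j => (S[b * 2 ^ k + j]?).toList).flatten :=
    (tilu_pick_flatten S (2 ^ k) (b * 2 ^ k)).symm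
  rw [hseg]
  unfold survSeg
  refine congrArg _ (List.map_congr_left fun j hj => ?_)
  have hj' : j < 2 ^ k := List.mem_range.mp hj
  have hdiv : (b * 2 ^ k + j) / 2 ^ k = b := by
    have hpos : 0 < 2 ^ k := by positivity
    rw [Nat.add_comm, Nat.add_mul_div_right _ _ hpos, Nat.div_eq_of_lt hj', Nat.zero_add]
  unfold leafL
  split_ifs with h1 h2
  · exact absurd hdiv (h _ h2)
  · simp [List.getElem?_eq_getElem h1]
  · simp [List.getElem?_eq_none (le_of_not_gt h1)]

lemma survSeg_removed {X : Type} (S : List X) (I : Finset (Fin S.length)) {i : Fin S.length}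
    (hiI : i ∈ I) : survSeg S I 0 (i : ℕ) = [] := by
  unfold survSeg leafL
  simp [List.range_succ, hiI]

lemma survSeg_top {X : Type} (S : List X) (I : Finset (Fin S.length)) (d : ℕ)
    (hlen : S.length ≤ 2 ^ d) : survSeg S I d 0 = surviving S I := by
  unfold survSeg
  simp only [zero_mul, zero_add]
  rw [show 2 ^ d = S.length + (2 ^ d - S.length) by omega, List.range_add, List.map_append,
    List.flatten_append]
  have h2 : (((List.range (2 ^ d - S.length)).map fun x => S.length + x).map
      (leafL S I)).flatten = [] := by
    apply tilu_flatten_nil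
    intro l hl
    simp only [List.mem_map] at hl
    obtain ⟨x, ⟨y, _, rfl⟩, rfl⟩ := hl
    exact dif_neg (by omega)
  rw [h2, List.append_nil]
  rw [surviving, tilu_filter_map_flatten, ← tilu_finRange_map_val, List.map_map]
  refine congrArg _ (List.map_congr_left fun i _ => ?_)
  show leafL S I (i : ℕ) = _
  unfold leafL
  rw [dif_pos i.isLt]
  simp only [Fin.eta]
  by_cases h : i ∈ I <;> simp [h]

lemma empLoss_eq_zero {X : Type} (h : X → Bool) (L : List (X × Bool)) :
    empLoss h L = 0 ↔ ∀ z ∈ L, h z.1 = z.2 := by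
  unfold empLoss
  rw [List.sum_eq_zero_iff]
  constructor
  · intro hz z hzL
    have := hz _ (List.mem_map_of_mem hzL)
    by_contra hc; simp [hc] at this
  · intro hz x hx
    obtain ⟨z, hzL, rfl⟩ := List.mem_map.mp hx
    simp [hz z hzL]

section Tickets

variable {X : Type} (d C : ℕ) (E : List (X × Bool) → Fin C → Bool)

/-- ticket for index `i` -/
def tkt (S : List (X × Bool)) (i : ℕ) : Fin (d * (C + 1)) → Bool :=
  fun j =>
    let q := finProdFinEquiv.symm j
    if h : (q.2 : ℕ) < C then E (seg_s10 S (q.1 : ℕ) (sib (i / 2 ^ (q.1 : ℕ)))) ⟨q.2, h⟩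
    else i.testBit q.1

/-- direction bit at level `k` -/
def tbit (t : Fin (d * (C + 1)) → Bool) (k : Fin d) : Bool :=
  t (finProdFinEquiv (k, Fin.last C))

/-- encoded sibling at level `k` -/
def tenc (t : Fin (d * (C + 1)) → Bool) (k : ℕ) : Fin C → Bool :=
  if h : k < d then fun r => t (finProdFinEquiv (⟨k, h⟩, r.castSucc)) else fun _ => false

lemma tbit_tkt (S : List (X × Bool)) (i : ℕ) (k : Fin d) :
    tbit d C (tkt d C E S i) k = i.testBit k := by
  unfold tbit tkt
  simp

lemma tenc_tkt (S : List (X × Bool)) (i : ℕ) {k : ℕ} (hk : k < d) :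
    tenc d C (tkt d C E S i) k = E (seg_s10 S k (sib (i / 2 ^ k))) := by
  funext r
  unfold tenc tkt
  rw [dif_pos hk]
  simp

/-- recovered index from a ticket -/
def recover (t : Fin (d * (C + 1)) → Bool) : ℕ :=
  ∑ k : Fin d, if tbit d C t k then 2 ^ (k : ℕ) else 0

lemma recover_tkt (S : List (X × Bool)) {i : ℕ} (hi : i < 2 ^ d) :
    recover d C (tkt d C E S i) = i := by
  unfold recover
  simp only [tbit_tkt]
  rw [Fin.sum_univ_eq_sum_range (fun k => if i.testBit k then 2 ^ k else 0) d]
  exact tilu_bitsum d i hi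

/-- look up a clean block's encoding from some removed sibling's ticket -/
def lookup (M : Multiset ((X × Bool) × (Fin (d * (C + 1)) → Bool))) (k b : ℕ) :
    Fin C → Bool :=
  if h : ∃ p ∈ M, recover d C p.2 / 2 ^ k = sib b then tenc d C h.choose.2 k
  else fun _ => false

/-- bottom-up reconstruction of the encoding of the surviving dataset -/
def F (Mg : (Fin C → Bool) → (Fin C → Bool) → Fin C → Bool)
    (M : Multiset ((X × Bool) × (Fin (d * (C + 1)) → Bool))) : ℕ → ℕ → Fin C → Bool
  | 0, b => if ∃ p ∈ M, recover d C p.2 / 2 ^ 0 = b then E [] else lookup d C M 0 b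
  | (k + 1), b =>
      if ∃ p ∈ M, recover d C p.2 / 2 ^ (k + 1) = b then
        Mg (F Mg M k (2 * b)) (F Mg M k (2 * b + 1))
      else lookup d C M (k + 1) b

lemma F_not_dirty (Mg) (M) (k b : ℕ)
    (h : ¬∃ p ∈ M, recover d C p.2 / 2 ^ k = b) :
    F d C E Mg M k b = lookup d C M k b := by
  cases k <;> simp only [F] <;> rw [if_neg h]

end Tickets

end TiLUAux
/-- **Theorem (TiLU scheme for mergeable classes).** Let `H` be a `C`-bit mergeable concept
class over a finite domain `X`, as witnessed by `Encode` (permutation-invariant), `Decode`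
(mapping into `H`, with `Decode (Encode S) ∈ ERM_H(S)` for realizable `S`) and `Merge`
(with `Encode (S₁ ∪ S₂) = Merge (Encode S₁) (Encode S₂)` whenever `S₁ ∪ S₂` is realizable).
Then for every dataset size `n ≥ 2` there is a ticketed learning–unlearning scheme for `H`,
valid for `H`-realizable datasets of size (at most) `n`, whose auxiliary information has
`⌈log₂ |H|⌉` bits and each of whose tickets has `⌈log₂ n⌉ · (C + 1)` bits. -/
theorem tilu_for_mergeable {X : Type} [Fintype X] [DecidableEq X]
    (H : Finset (X → Bool)) (C : ℕ)
    (Encode : List (X × Bool) → Fin C → Bool)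
    (Decode : (Fin C → Bool) → X → Bool)
    (Merge : (Fin C → Bool) → (Fin C → Bool) → Fin C → Bool)
    (hperm : ∀ S₁ S₂ : List (X × Bool), S₁.Perm S₂ → Encode S₁ = Encode S₂)
    (hdecH : ∀ b, Decode b ∈ H)
    (hdecERM : ∀ S, IsRealizable ↑H S → Decode (Encode S) ∈ ERM ↑H S)
    (hmerge : ∀ S₁ S₂, IsRealizable ↑H (S₁ ++ S₂) →
      Encode (S₁ ++ S₂) = Merge (Encode S₁) (Encode S₂)) :
    ∀ n : ℕ, 2 ≤ n →
      ∃ (Learn : (S : List (X × Bool)) →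
            (X → Bool) × (Fin (Nat.clog 2 H.card) → Bool) ×
              (Fin S.length → Fin (Nat.clog 2 n * (C + 1)) → Bool))
        (Unlearn : Multiset ((X × Bool) × (Fin (Nat.clog 2 n * (C + 1)) → Bool)) →
            (Fin (Nat.clog 2 H.card) → Bool) → (X → Bool)),
        ∀ S : List (X × Bool), S.length ≤ n → IsRealizable ↑H S →
          (Learn S).1 ∈ ERM ↑H S ∧
          ∀ I : Finset (Fin S.length),
            Unlearn (removedPairs S (Learn S).2.2 I) (Learn S).2.1 =
              (Learn (surviving S I)).1 := by
  intro n hn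
  classical
  set d := Nat.clog 2 n with hd
  set m := Nat.clog 2 H.card with hm
  have hn2 : n ≤ 2 ^ d := Nat.le_pow_clog (by norm_num) n
  have hH2 : H.card ≤ 2 ^ m := Nat.le_pow_clog (by norm_num) H.card
  -- auxiliary-information encoding of a hypothesis in H
  let eH : {h // h ∈ H} → (Fin m → Bool) := fun x j => (H.equivFin x : ℕ).testBit j
  have eH_inj : Function.Injective eH := by
    intro x y hxy
    have : (H.equivFin x : ℕ) = (H.equivFin y : ℕ) := by
      refine tilu_testbit_inj (lt_of_lt_of_le (H.equivFin x).2 hH2)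
        (lt_of_lt_of_le (H.equivFin y).2 hH2) fun j hj => ?_
      exact congrFun hxy ⟨j, hj⟩
    exact H.equivFin.injective (Fin.ext this)
  let encA : (X → Bool) → (Fin m → Bool) := fun h =>
    if hh : h ∈ H then eH ⟨h, hh⟩ else fun _ => false
  let decA : (Fin m → Bool) → (X → Bool) := fun a =>
    if ha : ∃ x, eH x = a then (ha.choose : {h // h ∈ H}).1 else Decode fun _ => false
  have roundA : ∀ h : X → Bool, h ∈ H → decA (encA h) = h := by
    intro h hh
    have he : encA h = eH ⟨h, hh⟩ := dif_pos hh
    have hex : ∃ x, eH x = encA h := ⟨⟨h, hh⟩, he.symm⟩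
    have : hex.choose = ⟨h, hh⟩ := eH_inj (hex.choose_spec.trans he)
    simp only [decA, dif_pos hex, this]
  -- the scheme
  refine ⟨fun S => (Decode (Encode S), encA (Decode (Encode S)),
      fun i => tkt d C Encode S (i : ℕ)),
    fun M a => if M = 0 then decA a else Decode (F d C Encode Merge M d 0), ?_⟩
  intro S hlen hreal
  refine ⟨hdecERM S hreal, ?_⟩
  intro I
  simp only
  have hreal_sub : ∀ L : List (X × Bool), (∀ z ∈ L, z ∈ S) → IsRealizable ↑H L := by
    obtain ⟨h, hhH, hh0⟩ := hreal
    intro L hL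
    exact ⟨h, hhH, (empLoss_eq_zero h L).mpr fun z hz =>
      (empLoss_eq_zero h S).mp hh0 z (hL z hz)⟩
  by_cases hI : I = ∅
  · subst hI
    have hM : removedPairs S (fun i => tkt d C Encode S (i : ℕ)) (∅ : Finset (Fin S.length)) = 0 := by
      simp [removedPairs]
    rw [hM, if_pos rfl]
    have hsurv : surviving S (∅ : Finset (Fin S.length)) = S := by
      unfold surviving
      simp [List.filter_true, List.map_get_finRange]
    rw [hsurv]
    exact roundA _ (hdecH _)
  · set tk : Fin S.length → Fin (d * (C + 1)) → Bool := fun i => tkt d C Encode S (i : ℕ)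
      with htk
    set M : Multiset ((X × Bool) × (Fin (d * (C + 1)) → Bool)) := removedPairs S tk I with hMdef
    have hMne : ¬ M = 0 := by
      simp only [hMdef, removedPairs, Multiset.map_eq_zero, ← Finset.val_eq_zero]
      exact fun h => hI (Finset.val_eq_zero.mp h)
    rw [if_neg hMne]
    have hrecov : ∀ i : Fin S.length, recover d C (tk i) = (i : ℕ) :=
      fun i => recover_tkt d C Encode S (lt_of_lt_of_le i.isLt (le_trans hlen hn2))
    have hdirty : ∀ k b : ℕ, (∃ p ∈ M, recover d C p.2 / 2 ^ k = b) ↔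
        ∃ i ∈ I, (i : ℕ) / 2 ^ k = b := by
      intro k b
      constructor
      · rintro ⟨p, hp, hpb⟩
        obtain ⟨i, hiI, rfl⟩ := Multiset.mem_map.mp hp
        exact ⟨i, hiI, by rwa [hrecov i] at hpb⟩
      · rintro ⟨i, hiI, hib⟩
        exact ⟨(S.get i, tk i), Multiset.mem_map_of_mem _ hiI, by rwa [hrecov i]⟩
    have key : ∀ k, k ≤ d → ∀ b, (∃ i ∈ I, (i : ℕ) / 2 ^ k = b) →
        F d C Encode Merge M k b = Encode (survSeg S I k b) := by
      intro k
      induction k with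
      | zero =>
        intro _ b hb
        simp only [F]
        rw [if_pos ((hdirty 0 b).mpr hb)]
        obtain ⟨i, hiI, hib⟩ := hb
        have hbi : b = (i : ℕ) := by simpa using hib.symm
        rw [hbi, survSeg_removed S I hiI]
      | succ k ih =>
        intro hk b hb
        have hkd : k < d := hk
        simp only [F]
        rw [if_pos ((hdirty (k + 1) b).mpr hb)]
        have hchild : ∀ c, c = 2 * b ∨ c = 2 * b + 1 →
            F d C Encode Merge M k c = Encode (survSeg S I k c) := by
          intro c hc
          by_cases hcd : ∃ i ∈ I, (i : ℕ) / 2 ^ k = c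
          · exact ih (le_of_lt hkd) c hcd
          · rw [F_not_dirty d C Encode Merge M k c (fun h => hcd ((hdirty k c).mp h))]
            obtain ⟨i, hiI, hib⟩ := hb
            have hi2 : (i : ℕ) / 2 ^ k = 2 * b ∨ (i : ℕ) / 2 ^ k = 2 * b + 1 := by
              have hdd : (i : ℕ) / 2 ^ k / 2 = b := by
                rw [Nat.div_div_eq_div_mul, ← pow_succ]; exact hib
              omega
            have hsibc : (i : ℕ) / 2 ^ k = sib c := by
              rcases hc with rfl | rfl
              · rw [sib_left]
                rcases hi2 with h | h
                · exact absurd ⟨i, hiI, h⟩ hcd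
                · exact h
              · rw [sib_right]
                rcases hi2 with h | h
                · exact h
                · exact absurd ⟨i, hiI, h⟩ hcd
            have hex : ∃ p ∈ M, recover d C p.2 / 2 ^ k = sib c :=
              ⟨(S.get i, tk i), Multiset.mem_map_of_mem _ hiI, by rw [hrecov i]; exact hsibc⟩
            rw [lookup, dif_pos hex]
            obtain ⟨hmem, hdiv⟩ := hex.choose_spec
            obtain ⟨i', hi'I, hp⟩ := Multiset.mem_map.mp hmem
            have h2 : hex.choose.2 = tk i' := by rw [← hp]
            have hi'c : (i' : ℕ) / 2 ^ k = sib c := by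
              rw [h2, hrecov i'] at hdiv; exact hdiv
            rw [h2, htk]
            rw [tenc_tkt d C Encode S (i' : ℕ) hkd, hi'c, sib_sib]
            rw [survSeg_clean S I k c fun i hi hieq => hcd ⟨i, hi, hieq⟩]
        rw [hchild (2 * b) (Or.inl rfl), hchild (2 * b + 1) (Or.inr rfl)]
        rw [survSeg_split]
        exact (hmerge _ _ (hreal_sub _ fun z hz => by
          rcases List.mem_append.mp hz with h | h
          · exact survSeg_mem h
          · exact survSeg_mem h)).symm
    obtain ⟨i, hiI⟩ := Finset.nonempty_iff_ne_empty.mpr hI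
    have hroot : F d C Encode Merge M d 0 = Encode (survSeg S I d 0) :=
      key d le_rfl 0 ⟨i, hiI, Nat.div_eq_of_lt (lt_of_lt_of_le i.isLt (le_trans hlen hn2))⟩
    rw [hroot, survSeg_top S I d (le_trans hlen hn2)]
end

section
/- The class of point functions is not o(|X|)-bit mergeable: there exists a constant c > 0 such that for every finite domain X = {1, …, |X|} with |X| ≥ 2 and every C ∈ ℕ, if the class H_pt of point functions over X is C-bit mergeable, then C ≥ c · |X|. -/
/-- The point function `h_a(x) = 1{x = a}` on the domain `Fin N` (representing `{1, …, N}`). -/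
def pointFn {N : ℕ} (a : Fin N) : Fin N → Bool := fun x => decide (x = a)

/-- The class of point functions over `Fin N`. -/
def Hpt (N : ℕ) : Set (Fin N → Bool) := Set.range pointFn

lemma empLoss_eq_zero_iff {X : Type} (h : X → Bool) (S : List (X × Bool)) :
    empLoss h S = 0 ↔ ∀ z ∈ S, h z.1 = z.2 := by
  unfold empLoss
  rw [List.sum_eq_zero_iff]
  constructor
  · intro H z hz
    have := H _ (List.mem_map_of_mem hz)
    by_contra hc
    simp [hc] at this
  · intro H x hx
    obtain ⟨z, hz, rfl⟩ := List.mem_map.mp hx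
    simp [H z hz]

/-- **Proposition (point functions are not `o(|X|)`-bit mergeable).** There is a constant
`c > 0` such that for every finite domain of size `N ≥ 2` and every `C`, if the class of
point functions over the domain is `C`-bit mergeable — i.e. there are a permutation-invariant
`Encode` into `{0,1}^C`, a `Decode` into the class with `Decode (Encode S) ∈ ERM(S)` for all
realizable `S`, and a `Merge` with `Encode (S₁ ∪ S₂) = Merge (Encode S₁) (Encode S₂)` whenever
`S₁ ∪ S₂` is realizable — then `C ≥ c · N`. -/
theorem point_functions_not_mergeable :
    ∃ c : ℝ, 0 < c ∧
      ∀ N : ℕ, 2 ≤ N → ∀ C : ℕ,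
        (∃ (Encode : List (Fin N × Bool) → Fin C → Bool)
           (Decode : (Fin C → Bool) → Fin N → Bool)
           (Merge : (Fin C → Bool) → (Fin C → Bool) → Fin C → Bool),
           (∀ S₁ S₂ : List (Fin N × Bool), S₁.Perm S₂ → Encode S₁ = Encode S₂) ∧
           (∀ b, Decode b ∈ Hpt N) ∧
           (∀ S, IsRealizable (Hpt N) S → Decode (Encode S) ∈ ERM (Hpt N) S) ∧
           (∀ S₁ S₂, IsRealizable (Hpt N) (S₁ ++ S₂) →
             Encode (S₁ ++ S₂) = Merge (Encode S₁) (Encode S₂))) →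
        c * N ≤ (C : ℝ) := by
  refine ⟨1/4, by norm_num, ?_⟩
  rintro N hN C ⟨Encode, Decode, Merge, _hPerm, hDec, hERM, hMerge⟩
  set m := N / 2 with hm
  have hmN : 2 * m ≤ N := by omega
  have hlt : ∀ (s : Fin m → Bool) (i : Fin m), 2 * i.val + (if s i then 1 else 0) < N := by
    intro s i; have := i.isLt; split <;> omega
  set pt : (Fin m → Bool) → Fin m → Fin N :=
    fun s i => ⟨2 * i.val + (if s i then 1 else 0), hlt s i⟩ with hptdef
  have ptinj : ∀ s t : Fin m → Bool, ∀ i j, pt s i = pt t j → i = j ∧ s i = t j := by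
    intro s t i j hij
    have hv : 2 * i.val + (if s i then 1 else 0) = 2 * j.val + (if t j then 1 else 0) :=
      congrArg Fin.val hij
    constructor
    · apply Fin.ext
      split at hv <;> split at hv <;> omega
    · cases hs : s i <;> cases ht : t j <;> simp [hs, ht] at hv ⊢ <;> omega
  set L : (Fin m → Bool) → List (Fin N × Bool) :=
    fun s => (List.finRange m).map (fun i => (pt s i, false)) with hLdef
  -- the key injectivity claim
  have Finj : Function.Injective (fun s => Encode (L s)) := by
    intro s t hst
    simp only at hst
    by_contra hne
    obtain ⟨i, hi⟩ : ∃ i, s i ≠ t i := by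
      by_contra h; push_neg at h; exact hne (funext h)
    set a := pt s i with ha
    set b := pt t i with hb
    have haA : ∀ j, pt t j ≠ a := by
      intro j h
      obtain ⟨hji, hbit⟩ := ptinj t s j i h
      subst hji
      exact hi hbit.symm
    have hbB : ∀ j, pt s j ≠ b := by
      intro j h
      obtain ⟨hji, hbit⟩ := ptinj s t j i h
      subst hji
      exact hi hbit
    set T : List (Fin N × Bool) :=
      ((List.finRange N).filter
        (fun x => !((decide (∃ j, pt t j = x)) || decide (x = a)))).map
        (fun x => (x, false)) with hTdef
    have memT : ∀ z : Fin N × Bool, z ∈ T ↔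
        z.2 = false ∧ (∀ j, pt t j ≠ z.1) ∧ z.1 ≠ a := by
      intro z
      constructor
      · intro hz
        obtain ⟨x, hx, rfl⟩ := List.mem_map.mp hz
        have := List.of_mem_filter hx
        simp at this
        exact ⟨rfl, this.1, this.2⟩
      · rintro ⟨h2, h3, h4⟩
        obtain ⟨x, xb⟩ := z
        simp at h2; subst h2
        apply List.mem_map.mpr
        refine ⟨x, ?_, rfl⟩
        apply List.mem_filter.mpr
        simp
        exact ⟨h3, h4⟩
    have memL : ∀ (u : Fin m → Bool) (z : Fin N × Bool),
        z ∈ L u ↔ z.2 = false ∧ ∃ j, pt u j = z.1 := by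
      intro u z
      simp only [hLdef, List.mem_map, List.mem_finRange]
      constructor
      · rintro ⟨j, _, rfl⟩
        exact ⟨rfl, j, rfl⟩
      · rintro ⟨h2, j, hj⟩
        obtain ⟨x, xb⟩ := z
        simp at h2 hj; subst h2
        exact ⟨j, trivial, by simp [hj]⟩
    -- Structure of U1 = L t ++ T : all labels false, all points ≠ a, covers all x ≠ a
    have hU1 : ∀ z ∈ L t ++ T, z.2 = false ∧ z.1 ≠ a := by
      intro z hz
      rcases List.mem_append.mp hz with hz | hz
      · obtain ⟨h2, j, hj⟩ := (memL t z).mp hz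
        exact ⟨h2, hj ▸ haA j⟩
      · obtain ⟨h2, _, h4⟩ := (memT z).mp hz
        exact ⟨h2, h4⟩
    have cover1 : ∀ x : Fin N, x ≠ a → (x, false) ∈ L t ++ T := by
      intro x hx
      by_cases hc : ∃ j, pt t j = x
      · exact List.mem_append.mpr (Or.inl ((memL t _).mpr ⟨rfl, hc⟩))
      · push_neg at hc
        exact List.mem_append.mpr (Or.inr ((memT _).mpr ⟨rfl, hc, hx⟩))
    -- realizability of U1 via pointFn a
    have lossa1 : empLoss (pointFn a) (L t ++ T) = 0 := by
      rw [empLoss_eq_zero_iff]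
      intro z hz
      obtain ⟨h2, h3⟩ := hU1 z hz
      simp [pointFn, h2, h3]
    have hreal1 : IsRealizable (Hpt N) (L t ++ T) := ⟨pointFn a, ⟨a, rfl⟩, lossa1⟩
    -- Decode of U1 must be pointFn a
    have hD1 : Decode (Encode (L t ++ T)) = pointFn a := by
      obtain ⟨hmem, hmin⟩ := hERM _ hreal1
      obtain ⟨c, hc⟩ := hDec (Encode (L t ++ T))
      have hzero : empLoss (Decode (Encode (L t ++ T))) (L t ++ T) = 0 :=
        Nat.le_zero.mp (lossa1 ▸ hmin (pointFn a) ⟨a, rfl⟩)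
      rw [← hc] at hzero ⊢
      rw [empLoss_eq_zero_iff] at hzero
      by_cases hca : c = a
      · rw [hca]
      · have := hzero (c, false) (cover1 c hca)
        simp [pointFn] at this
    -- U2 = L s ++ T : realizable via pointFn b
    have hU2 : ∀ z ∈ L s ++ T, z.2 = false ∧ z.1 ≠ b := by
      intro z hz
      rcases List.mem_append.mp hz with hz | hz
      · obtain ⟨h2, j, hj⟩ := (memL s z).mp hz
        exact ⟨h2, hj ▸ hbB j⟩
      · obtain ⟨h2, h3, _⟩ := (memT z).mp hz
        exact ⟨h2, fun he => h3 i (hb ▸ he ▸ rfl)⟩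
    have lossb2 : empLoss (pointFn b) (L s ++ T) = 0 := by
      rw [empLoss_eq_zero_iff]
      intro z hz
      obtain ⟨h2, h3⟩ := hU2 z hz
      simp [pointFn, h2, h3]
    have hreal2 : IsRealizable (Hpt N) (L s ++ T) := ⟨pointFn b, ⟨b, rfl⟩, lossb2⟩
    -- the two encodings coincide
    have hEnc : Encode (L s ++ T) = Encode (L t ++ T) := by
      rw [hMerge _ _ hreal2, hMerge _ _ hreal1, hst]
    -- Decode of U2 is pointFn a, yet must have zero loss on U2 which contains (a, false)
    obtain ⟨hmem2, hmin2⟩ := hERM _ hreal2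
    have hzero2 : empLoss (Decode (Encode (L s ++ T))) (L s ++ T) = 0 :=
      Nat.le_zero.mp (lossb2 ▸ hmin2 (pointFn b) ⟨b, rfl⟩)
    rw [hEnc, hD1, empLoss_eq_zero_iff] at hzero2
    have hafmem : ((a, false) : Fin N × Bool) ∈ L s ++ T :=
      List.mem_append.mpr (Or.inl ((memL s _).mpr ⟨rfl, i, rfl⟩))
    have := hzero2 (a, false) hafmem
    simp [pointFn] at this
  -- counting
  have hcard : (2 : ℕ) ^ m ≤ 2 ^ C := by
    have h := Fintype.card_le_of_injective _ Finj
    simpa using h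
  have hmC : m ≤ C := (Nat.pow_le_pow_iff_right (by norm_num)).mp hcard
  have h1 : (N : ℝ) ≤ 4 * m := by exact_mod_cast (by omega : N ≤ 4 * m)
  have h2 : (m : ℝ) ≤ C := by exact_mod_cast hmC
  linarith
end

section
/- There exists a (central, non-ticketed) learning–unlearning scheme for the class H_thresh of one-dimensional threshold functions over X = {1, …, |X|}, valid for H_thresh-realizable datasets of size n, with space complexity C = O((log|X|) · (log n)): that is, there exist Learn and Unlearn such that Learn(S) returns h ∈ ERM_{H_thresh}(S) together with auxiliary information aux of O((log|X|)(log n)) bits, and for every I ⊆ [n], Unlearn(S_I, aux) returns the same hypothesis that Learn returns on S ∖ S_I. -/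
/-- The unlearning request `S_I`: the examples of `S` at indices in `I`,
in their original order. -/
def removedList {Z : Type} (S : List Z) (I : Finset (Fin S.length)) : List Z :=
  ((List.finRange S.length).filter fun i => decide (i ∈ I)).map S.get

/-- The threshold function `h_{>a}(x) = 1{x > a}` on the domain `{1, …, N}`, represented on
`Fin N` (where `x : Fin N` stands for the domain point `x + 1`): `h_{>a} x = 1{a ≤ x}`. -/
def thrFn (N : ℕ) (a : ℕ) : Fin N → Bool := fun x => decide (a ≤ (x : ℕ))

/-- The class of one-dimensional threshold functions over `{1, …, N}`,
indexed by `a ∈ {0, 1, …, N}`. -/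
def Hthr (N : ℕ) : Set (Fin N → Bool) := {h | ∃ a ≤ N, h = thrFn N a}

namespace LUThr


/-- count of true-labeled examples with value < m -/
def cT {N : ℕ} (S : List (Fin N × Bool)) (m : ℕ) : ℕ :=
  S.countP (fun z => z.2 && decide ((z.1 : ℕ) < m))

/-- count of false-labeled examples with value ≥ m -/
def cF {N : ℕ} (S : List (Fin N × Bool)) (m : ℕ) : ℕ :=
  S.countP (fun z => !z.2 && decide (m ≤ (z.1 : ℕ)))

/-- dyadic binary search driven by boolean predicates P ("m not too big") and Q ("m not too small") -/
def go (P Q : ℕ → Bool) : ℕ → ℕ → ℕ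
  | 0, m => m
  | k+1, m => if P m && Q m then m else if !Q m then go P Q k (m + 2^k) else go P Q k (m - 2^k)

/-- the data stored along the search path: pairs of counts at each visited node -/
def trace (P Q : ℕ → Bool) (cTS cFS : ℕ → ℕ) : ℕ → ℕ → ℕ → ℕ × ℕ
  | 0, _, _ => (0, 0)
  | _+1, m, 0 => (cTS m, cFS m)
  | k+1, m, j+1 =>
      if P m && Q m then (0, 0)
      else if !Q m then trace P Q cTS cFS k (m + 2^k) j
      else trace P Q cTS cFS k (m - 2^k) j

/-- replay of the search by the unlearner, using stored counts `d` and the removed counts -/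
def replay (cTR cFR : ℕ → ℕ) (NN : ℕ) : (ℕ → ℕ × ℕ) → ℕ → ℕ → ℕ
  | _, 0, m => m
  | d, k+1, m =>
      if (decide ((d 0).1 = cTR m) && decide (m ≤ NN)) && decide ((d 0).2 = cFR m) then m
      else if !(decide ((d 0).2 = cFR m)) then replay cTR cFR NN (fun j => d (j+1)) k (m + 2^k)
      else replay cTR cFR NN (fun j => d (j+1)) k (m - 2^k)

def pPred (N : ℕ) (S : List (Fin N × Bool)) : ℕ → Bool :=
  fun m => decide (cT S m = 0) && decide (m ≤ N)

def qPred {N : ℕ} (S : List (Fin N × Bool)) : ℕ → Bool :=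
  fun m => decide (cF S m = 0)

def M1 (N : ℕ) (S : List (Fin N × Bool)) : ℕ :=
  ((S.filter (fun z => z.2)).map (fun z => (z.1 : ℕ))).foldr min N

def M0 {N : ℕ} (S : List (Fin N × Bool)) : ℕ :=
  ((S.filter (fun z => !z.2)).map (fun z => (z.1 : ℕ) + 1)).foldr max 0

/-- binary decoding: number from k bits -/
def recX : ℕ → (ℕ → Bool) → ℕ
  | 0, _ => 0
  | k+1, f => (if f 0 then 1 else 0) + 2 * recX k (fun i => f (i+1))

/-- base-q decoding: number from k digits -/
def recE (q : ℕ) : ℕ → (ℕ → ℕ) → ℕ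
  | 0, _ => 0
  | k+1, e => e 0 + q * recE q k (fun i => e (i+1))


theorem recX_congr : ∀ (k : ℕ) (f g : ℕ → Bool), (∀ i < k, f i = g i) → recX k f = recX k g := by
  intro k
  induction k with
  | zero => intro f g _; rfl
  | succ k ih =>
    intro f g h
    simp only [recX, h 0 (Nat.succ_pos k)]
    congr 1
    exact congrArg (2 * ·) (ih _ _ fun i hi => h (i+1) (by omega))

theorem recX_bits : ∀ (k X : ℕ), X < 2^k → recX k (fun i => decide ((X / 2^i) % 2 = 1)) = X := by
  intro k
  induction k with
  | zero => intro X h; interval_cases X; rfl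
  | succ k ih =>
    intro X h
    have h2 : X / 2 < 2^k := Nat.div_lt_of_lt_mul (by rw [pow_succ] at h; omega)
    have heq : (fun i => decide ((X / 2^(i+1)) % 2 = 1)) = (fun i => decide (((X/2) / 2^i) % 2 = 1)) := by
      funext i
      congr 1
      rw [pow_succ, Nat.div_div_eq_div_mul, Nat.mul_comm, ← Nat.div_div_eq_div_mul]
    simp only [recX]
    rw [show (fun i => decide ((X / 2^(i+1)) % 2 = 1)) = _ from heq] at *
    rw [heq, ih (X/2) h2]
    have : X % 2 < 2 := Nat.mod_lt _ (by norm_num)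
    rcases Nat.even_or_odd X with he | ho
    · have : X % 2 = 0 := Nat.even_iff.mp he
      simp only [pow_zero, Nat.div_one, this]
      simp
      omega
    · have : X % 2 = 1 := Nat.odd_iff.mp ho
      simp only [pow_zero, Nat.div_one, this]
      simp
      omega

theorem recE_lt (q : ℕ) (hq : 1 ≤ q) : ∀ (k : ℕ) (e : ℕ → ℕ), (∀ i < k, e i < q) → recE q k e < q^k := by
  intro k
  induction k with
  | zero => intro e _; simp [recE]
  | succ k ih =>
    intro e he
    have h0 : e 0 < q := he 0 (Nat.succ_pos k)
    have h1 : recE q k (fun i => e (i+1)) < q^k := ih _ fun i hi => he (i+1) (by omega)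
    simp only [recE, pow_succ]
    have hqk : 1 ≤ q^k := Nat.one_le_pow _ _ hq
    have hmul : q * recE q k (fun i => e (i+1)) + q ≤ q * q^k := by
      have := Nat.mul_le_mul_left q h1
      calc q * recE q k (fun i => e (i+1)) + q = q * (recE q k (fun i => e (i+1)) + 1) := by ring
        _ ≤ q * q^k := Nat.mul_le_mul_left q h1
    have hc : q^k * q = q * q^k := Nat.mul_comm _ _
    omega

theorem recE_digit (q : ℕ) (hq : 1 < q) :
    ∀ (k : ℕ) (e : ℕ → ℕ), (∀ i < k, e i < q) → ∀ i < k, (recE q k e / q^i) % q = e i := by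
  intro k
  induction k with
  | zero => intro e _ i hi; omega
  | succ k ih =>
    intro e he i hi
    have h0 : e 0 < q := he 0 (Nat.succ_pos k)
    match i with
    | 0 =>
      simp only [recE, pow_zero, Nat.div_one]
      rw [Nat.add_mul_mod_self_left, Nat.mod_eq_of_lt h0]
    | i+1 =>
      simp only [recE]
      have : (e 0 + q * recE q k (fun j => e (j+1))) / q^(i+1) = recE q k (fun j => e (j+1)) / q^i := by
        rw [pow_succ, Nat.mul_comm (q^i) q, ← Nat.div_div_eq_div_mul]
        congr 1
        rw [Nat.add_mul_div_left _ _ (by omega), Nat.div_eq_of_lt h0, Nat.zero_add]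
      rw [this]
      exact ih _ (fun j hj => he (j+1) (by omega)) i (by omega)

theorem foldr_min_le_base (b : ℕ) (l : List ℕ) : l.foldr min b ≤ b := by
  induction l with
  | nil => simp
  | cons a l ih => simp only [List.foldr_cons]; omega

theorem foldr_min_le_mem {a : ℕ} {l : List ℕ} (h : a ∈ l) (b : ℕ) : l.foldr min b ≤ a := by
  induction l with
  | nil => simp at h
  | cons c l ih =>
    rcases List.mem_cons.mp h with rfl | h
    · simp only [List.foldr_cons]; omega
    · have := ih h; simp only [List.foldr_cons]; omega

theorem le_foldr_min {c b : ℕ} {l : List ℕ} (hb : c ≤ b) (h : ∀ a ∈ l, c ≤ a) : c ≤ l.foldr min b := by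
  induction l with
  | nil => simpa
  | cons a l ih =>
    have h1 := h a (by simp)
    have h2 := ih fun x hx => h x (by simp [hx])
    simp only [List.foldr_cons]; omega

theorem le_foldr_max {a : ℕ} {l : List ℕ} (h : a ∈ l) (b : ℕ) : a ≤ l.foldr max b := by
  induction l with
  | nil => simp at h
  | cons c l ih =>
    rcases List.mem_cons.mp h with rfl | h
    · simp only [List.foldr_cons]; omega
    · have := ih h; simp only [List.foldr_cons]; omega

theorem foldr_max_le {c b : ℕ} {l : List ℕ} (hb : b ≤ c) (h : ∀ a ∈ l, a ≤ c) : l.foldr max b ≤ c := by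
  induction l with
  | nil => simpa
  | cons a l ih =>
    have h1 := h a (by simp)
    have h2 := ih fun x hx => h x (by simp [hx])
    simp only [List.foldr_cons]; omega

theorem M1_le_N {N : ℕ} (S : List (Fin N × Bool)) : M1 N S ≤ N := foldr_min_le_base _ _

theorem M1_le_of_true {N : ℕ} {S : List (Fin N × Bool)} {z : Fin N × Bool}
    (hz : z ∈ S) (ht : z.2 = true) : M1 N S ≤ (z.1 : ℕ) := by
  apply foldr_min_le_mem
  exact List.mem_map_of_mem (List.mem_filter.mpr ⟨hz, by simp [ht]⟩)

theorem lt_M0_of_false {N : ℕ} {S : List (Fin N × Bool)} {z : Fin N × Bool}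
    (hz : z ∈ S) (ht : z.2 = false) : (z.1 : ℕ) + 1 ≤ M0 S := by
  apply le_foldr_max
  exact List.mem_map_of_mem (List.mem_filter.mpr ⟨hz, by simp [ht]⟩)

theorem cT_pos {N : ℕ} {S : List (Fin N × Bool)} {m : ℕ} (h : cT S m ≠ 0) :
    ∃ z ∈ S, z.2 = true ∧ (z.1 : ℕ) < m := by
  have := List.countP_pos_iff.mp (Nat.pos_of_ne_zero h)
  obtain ⟨z, hz, hp⟩ := this
  simp only [Bool.and_eq_true, decide_eq_true_eq] at hp
  exact ⟨z, hz, hp.1, hp.2⟩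

theorem cF_pos {N : ℕ} {S : List (Fin N × Bool)} {m : ℕ} (h : cF S m ≠ 0) :
    ∃ z ∈ S, z.2 = false ∧ m ≤ (z.1 : ℕ) := by
  have := List.countP_pos_iff.mp (Nat.pos_of_ne_zero h)
  obtain ⟨z, hz, hp⟩ := this
  simp only [Bool.and_eq_true, Bool.not_eq_true', decide_eq_true_eq] at hp
  exact ⟨z, hz, hp.1, hp.2⟩

theorem cT_eq_zero {N : ℕ} {S : List (Fin N × Bool)} {m : ℕ}
    (h : ∀ z ∈ S, z.2 = true → m ≤ (z.1 : ℕ)) : cT S m = 0 := by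
  apply List.countP_eq_zero.mpr
  intro z hz
  simp only [Bool.and_eq_true, decide_eq_true_eq, not_and]
  intro h2
  exact Nat.not_lt.mpr (h z hz h2)

theorem cF_eq_zero {N : ℕ} {S : List (Fin N × Bool)} {m : ℕ}
    (h : ∀ z ∈ S, z.2 = false → (z.1 : ℕ) < m) : cF S m = 0 := by
  apply List.countP_eq_zero.mpr
  intro z hz
  simp only [Bool.and_eq_true, Bool.not_eq_true', decide_eq_true_eq, not_and]
  intro h2
  exact Nat.not_le.mpr (h z hz h2)

/-- the empirical loss of a threshold equals the two counts -/
theorem empLoss_eq {N : ℕ} (S : List (Fin N × Bool)) (a : ℕ) :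
    (S.map fun z => if (decide (a ≤ (z.1:ℕ)) : Bool) = z.2 then 0 else 1).sum = cT S a + cF S a := by
  induction S with
  | nil => simp [cT, cF]
  | cons z S ih =>
    simp only [List.map_cons, List.sum_cons, cT, cF, List.countP_cons] at *
    rcases hz : z.2 with _ | _ <;> by_cases ha : a ≤ (z.1 : ℕ) <;>
      simp [hz, ha, Nat.not_le.mp, ih] <;> omega



theorem countP_filter_split {α : Type*} (p q : α → Bool) (l : List α) :
    l.countP p = (l.filter fun a => !q a).countP p + (l.filter q).countP p := by
  induction l with
  | nil => simp
  | cons a l ih =>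
    rcases hq : q a with _|_ <;>
      simp [List.countP_cons, List.filter_cons, hq, ih] <;> omega

theorem countP_split {Z : Type} (p : Z → Bool) (S : List Z) (I : Finset (Fin S.length)) :
    S.countP p = (surviving S I).countP p + (removedList S I).countP p := by
  have hS : ((List.finRange S.length).map S.get).countP p = S.countP p := by
    rw [List.map_get_finRange]
  rw [← hS, List.countP_map]
  unfold surviving removedList
  rw [List.countP_map, List.countP_map]
  have : (fun i : Fin S.length => decide (i ∉ I)) = fun i => !(decide (i ∈ I)) := by
    funext i; simp
  rw [this]
  exact countP_filter_split _ _ _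

/-- invariant lemma: the search lands on a valid point -/
theorem go_valid (P Q : ℕ → Bool) (mm0 mm1 : ℕ) (hM : mm0 ≤ mm1)
    (hPf : ∀ m, P m = false → mm1 < m) (hQf : ∀ m, Q m = false → m < mm0)
    (hv : ∀ m, mm0 ≤ m → m ≤ mm1 → P m = true ∧ Q m = true) :
    ∀ k m, mm0 < m + 2^k → m < mm1 + 2^k →
      P (go P Q k m) = true ∧ Q (go P Q k m) = true := by
  intro k
  induction k with
  | zero =>
    intro m h0 h1
    simp only [pow_zero] at h0 h1
    exact hv m (by omega) (by omega)
  | succ k ih =>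
    intro m h0 h1
    have hp2 : (2:ℕ)^(k+1) = 2^k + 2^k := by rw [pow_succ]; omega
    have hk : 0 < 2^k := pow_pos (by norm_num) k
    rcases hP : P m with _|_ <;> rcases hQ : Q m with _|_
    · -- P false, Q false : go right
      have := hQf m hQ
      simp only [go, hP, hQ, Bool.and_self, Bool.not_false, if_true, if_false]
      exact ih (m + 2^k) (by omega) (by omega)
    · -- P false, Q true : go left
      have := hPf m hP
      simp only [go, hP, hQ, Bool.false_and, Bool.not_true, if_false]
      exact ih (m - 2^k) (by omega) (by omega)
    · -- P true, Q false : go right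
      have := hQf m hQ
      simp only [go, hP, hQ, Bool.and_false, Bool.not_false, if_false, if_true]
      exact ih (m + 2^k) (by omega) (by omega)
    · simp [go, hP, hQ]

/-- consistency lemma: the replay on the removed data with stored trace equals
the fresh search on the survivors -/
theorem replay_eq_go (P Q P' Q' : ℕ → Bool) (cTS cFS cTR cFR : ℕ → ℕ) (NN : ℕ)
    (hP : ∀ m, (decide (cTS m = cTR m) && decide (m ≤ NN)) = P' m)
    (hQ : ∀ m, (decide (cFS m = cFR m)) = Q' m)
    (h3 : ∀ m, P m = true → Q m = true → P' m = true ∧ Q' m = true)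
    (h1 : ∀ m, Q' m = false → Q m = false)
    (h2 : ∀ m, P' m = false → P m = false)
    (h4 : ∀ m, Q m = false → P' m = true) :
    ∀ k m, replay cTR cFR NN (trace P Q cTS cFS k m) k m = go P' Q' k m := by
  intro k
  induction k with
  | zero => intro m; rfl
  | succ k ih =>
    intro m
    have hd0 : trace P Q cTS cFS (k+1) m 0 = (cTS m, cFS m) := rfl
    have hPm : (decide ((trace P Q cTS cFS (k+1) m 0).1 = cTR m) && decide (m ≤ NN)) = P' m := by
      rw [hd0]; exact hP m
    have hQm : (decide ((trace P Q cTS cFS (k+1) m 0).2 = cFR m)) = Q' m := by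
      rw [hd0]; exact hQ m
    have hshift_r : Q m = false →
        (fun j => trace P Q cTS cFS (k+1) m (j+1)) = trace P Q cTS cFS k (m + 2^k) := by
      intro hq
      funext j
      simp [trace, hq]
    have hshift_l : P m = false → Q m = true →
        (fun j => trace P Q cTS cFS (k+1) m (j+1)) = trace P Q cTS cFS k (m - 2^k) := by
      intro hp hq
      funext j
      simp [trace, hp, hq]
    rcases hP' : P' m with _|_ <;> rcases hQ' : Q' m with _|_
    · -- P' false Q' false : both go right
      have hq := h1 m hQ'
      simp only [replay, go, hPm, hQm, hP', hQ', Bool.and_false, Bool.not_false, if_false, if_true,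
        hshift_r hq]
      exact ih (m + 2^k)
    · -- P' false Q' true : both go left
      have hp := h2 m hP'
      have hq : Q m = true := by
        rcases hqc : Q m with _|_
        · exact absurd (h4 m hqc) (by simp [hP'])
        · rfl
      simp only [replay, go, hPm, hQm, hP', hQ', Bool.false_and, Bool.not_true, if_false,
        hshift_l hp hq]
      exact ih (m - 2^k)
    · -- P' true Q' false : both go right
      have hq := h1 m hQ'
      simp only [replay, go, hPm, hQm, hP', hQ', Bool.and_false, Bool.not_false, if_false, if_true,
        hshift_r hq]
      exact ih (m + 2^k)
    · -- both stop
      simp only [replay, go, hPm, hQm, hP', hQ', Bool.and_self, Bool.true_and, if_true]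

theorem replay_congr (cTR cFR : ℕ → ℕ) (NN : ℕ) :
    ∀ (k : ℕ) (d d' : ℕ → ℕ × ℕ) (m : ℕ), (∀ j < k, d j = d' j) →
      replay cTR cFR NN d k m = replay cTR cFR NN d' k m := by
  intro k
  induction k with
  | zero => intro d d' m _; rfl
  | succ k ih =>
    intro d d' m h
    have h0 : d 0 = d' 0 := h 0 (Nat.succ_pos k)
    simp only [replay, h0]
    have hrec : ∀ mm, replay cTR cFR NN (fun j => d (j+1)) k mm
        = replay cTR cFR NN (fun j => d' (j+1)) k mm := by
      intro mm; exact ih _ _ mm fun j hj => h (j+1) (by omega)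
    split <;> [rfl; (split <;> apply hrec)]

theorem empLoss_thr {N : ℕ} (S : List (Fin N × Bool)) (a : ℕ) :
    empLoss (thrFn N a) S = cT S a + cF S a := by
  unfold empLoss thrFn
  exact empLoss_eq S a

theorem mem_of_mem_surviving {Z : Type} {S : List Z} {I : Finset (Fin S.length)} {z : Z}
    (h : z ∈ surviving S I) : z ∈ S := by
  unfold surviving at h
  obtain ⟨i, hi, rfl⟩ := List.mem_map.mp h
  have := List.get_mem S i
  simpa using this

theorem M0_le_N {N : ℕ} (S : List (Fin N × Bool)) : M0 S ≤ N := by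
  apply foldr_max_le (Nat.zero_le N)
  intro a ha
  obtain ⟨z, hz, rfl⟩ := List.mem_map.mp ha
  exact z.1.isLt

theorem M0_le_M1 {N : ℕ} {S : List (Fin N × Bool)} (h : IsRealizable (Hthr N) S) :
    M0 S ≤ M1 N S := by
  obtain ⟨h', ⟨a, haN, rfl⟩, hloss⟩ := h
  rw [empLoss_thr] at hloss
  have hcT : cT S a = 0 := by omega
  have hcF : cF S a = 0 := by omega
  have h1 : M0 S ≤ a := by
    apply foldr_max_le (Nat.zero_le a)
    intro u hu
    obtain ⟨z, hz, rfl⟩ := List.mem_map.mp hu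
    have hzS := (List.mem_filter.mp hz).1
    have hzf : z.2 = false := by simpa using (List.mem_filter.mp hz).2
    have hall := List.countP_eq_zero.mp hcF z hzS
    simp only [hzf, Bool.not_false, Bool.true_and, decide_eq_true_eq] at hall
    omega
  have h2 : a ≤ M1 N S := by
    apply le_foldr_min haN
    intro u hu
    obtain ⟨z, hz, rfl⟩ := List.mem_map.mp hu
    have hzS := (List.mem_filter.mp hz).1
    have hzt : z.2 = true := by simpa using (List.mem_filter.mp hz).2
    have hall := List.countP_eq_zero.mp hcT z hzS
    simp only [hzt, Bool.true_and, decide_eq_true_eq] at hall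
    omega
  omega

theorem pPred_false {N : ℕ} {S : List (Fin N × Bool)} {m : ℕ} (h : pPred N S m = false) :
    M1 N S < m := by
  simp only [pPred, Bool.and_eq_false_iff, decide_eq_false_iff_not] at h
  rcases h with h | h
  · obtain ⟨z, hz, hzt, hzm⟩ := cT_pos h
    have := M1_le_of_true hz hzt
    omega
  · have := M1_le_N S
    omega

theorem qPred_false {N : ℕ} {S : List (Fin N × Bool)} {m : ℕ} (h : qPred S m = false) :
    m < M0 S := by
  simp only [qPred, decide_eq_false_iff_not] at h
  obtain ⟨z, hz, hzf, hzm⟩ := cF_pos h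
  have := lt_M0_of_false hz hzf
  omega

theorem pq_true {N : ℕ} {S : List (Fin N × Bool)} {m : ℕ} (h0 : M0 S ≤ m) (h1 : m ≤ M1 N S) :
    pPred N S m = true ∧ qPred S m = true := by
  constructor
  · simp only [pPred, Bool.and_eq_true, decide_eq_true_eq]
    refine ⟨cT_eq_zero fun z hz hzt => ?_, le_trans h1 (M1_le_N S)⟩
    have := M1_le_of_true hz hzt
    omega
  · simp only [qPred, decide_eq_true_eq]
    apply cF_eq_zero
    intro z hz hzf
    have := lt_M0_of_false hz hzf
    omega

theorem trace_le {N : ℕ} (P Q : ℕ → Bool) (S : List (Fin N × Bool)) :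
    ∀ k m j, (trace P Q (cT S) (cF S) k m j).1 ≤ S.length ∧
      (trace P Q (cT S) (cF S) k m j).2 ≤ S.length := by
  intro k
  induction k with
  | zero => intro m j; simp [trace]
  | succ k ih =>
    intro m j
    match j with
    | 0 => exact ⟨List.countP_le_length, List.countP_le_length⟩
    | j+1 =>
      simp only [trace]
      split
      · simp
      · split
        · exact ih _ _
        · exact ih _ _

/-- the compressed digit sequence stored by the learner -/
def eSq (N : ℕ) (S : List (Fin N × Bool)) : ℕ → ℕ := fun i =>
  if i % 2 = 0 then
    (trace (pPred N S) (qPred S) (cT S) (cF S) (Nat.clog 2 N + 1) (2 ^ Nat.clog 2 N) (i/2)).1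
  else
    (trace (pPred N S) (qPred S) (cT S) (cF S) (Nat.clog 2 N + 1) (2 ^ Nat.clog 2 N) (i/2)).2

def bigX (N n : ℕ) (S : List (Fin N × Bool)) : ℕ :=
  recE (2 ^ (Nat.clog 2 n + 1)) (2 * (Nat.clog 2 N + 1)) (eSq N S)

def LearnF (N n : ℕ) (S : List (Fin N × Bool)) :
    (Fin N → Bool) × (Fin (2 * ((Nat.clog 2 N + 1) * (Nat.clog 2 n + 1))) → Bool) :=
  (thrFn N (go (pPred N S) (qPred S) (Nat.clog 2 N + 1) (2 ^ Nat.clog 2 N)),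
   fun i => decide ((bigX N n S / 2 ^ (i : ℕ)) % 2 = 1))

def UnlearnF (N n : ℕ) (R : List (Fin N × Bool))
    (α : Fin (2 * ((Nat.clog 2 N + 1) * (Nat.clog 2 n + 1))) → Bool) : Fin N → Bool :=
  let cs := 2 * ((Nat.clog 2 N + 1) * (Nat.clog 2 n + 1))
  let X := recX cs (fun i => if h : i < cs then α ⟨i, h⟩ else false)
  let q := 2 ^ (Nat.clog 2 n + 1)
  thrFn N (replay (cT R) (cF R) N (fun j => ((X / q ^ (2*j)) % q, (X / q ^ (2*j+1)) % q))
    (Nat.clog 2 N + 1) (2 ^ Nat.clog 2 N))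

end LUThr

open LUThr in
/-- **Theorem (central LU scheme for 1D thresholds).** There is a constant `c` such that for
every domain size `N` and dataset size `n` there is a central (non-ticketed)
learning–unlearning scheme for the class of 1D thresholds over `{1, …, N}`, valid for all
realizable datasets of size (at most) `n`, whose auxiliary information has at most
`c · (log N) · (log n) = O((log|X|)(log n))` bits: `Learn S` returns an empirical risk
minimizer together with the auxiliary string, and for every unlearning request `I`,
`Unlearn (S_I, aux)` returns exactly the hypothesis that `Learn` returns on `S ∖ S_I`. -/
theorem thresholds_central_lu :
    ∃ c : ℕ, 0 < c ∧
      ∀ N n : ℕ, ∃ cs : ℕ,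
        cs ≤ c * ((Nat.clog 2 N + 1) * (Nat.clog 2 n + 1)) ∧
        ∃ (Learn : List (Fin N × Bool) → (Fin N → Bool) × (Fin cs → Bool))
          (Unlearn : List (Fin N × Bool) → (Fin cs → Bool) → (Fin N → Bool)),
          ∀ S : List (Fin N × Bool), S.length ≤ n → IsRealizable (Hthr N) S →
            (Learn S).1 ∈ ERM (Hthr N) S ∧
            ∀ I : Finset (Fin S.length),
              Unlearn (removedList S I) (Learn S).2 = (Learn (surviving S I)).1 := by
  refine ⟨4, by norm_num, fun N n => ?_⟩
  refine ⟨2 * ((Nat.clog 2 N + 1) * (Nat.clog 2 n + 1)),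
    Nat.mul_le_mul_right _ (by norm_num), LearnF N n, UnlearnF N n,
    fun S hlen hreal => ?_⟩
  have hq1 : 1 < 2 ^ (Nat.clog 2 n + 1) := Nat.one_lt_two_pow_iff.mpr (by omega)
  have hnq : n < 2 ^ (Nat.clog 2 n + 1) := by
    have := Nat.le_pow_clog (by norm_num : 1 < 2) n
    have h2 : (2:ℕ) ^ (Nat.clog 2 n + 1) = 2 * 2 ^ Nat.clog 2 n := by rw [pow_succ]; ring
    omega
  have hNle : N ≤ 2 ^ Nat.clog 2 N := Nat.le_pow_clog (by norm_num : 1 < 2) N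
  have hM : M0 S ≤ M1 N S := M0_le_M1 hreal
  constructor
  · -- ERM
    have hval := go_valid (pPred N S) (qPred S) (M0 S) (M1 N S) hM
      (fun m hm => pPred_false hm) (fun m hm => qPred_false hm)
      (fun m h0 h1 => pq_true h0 h1) (Nat.clog 2 N + 1) (2 ^ Nat.clog 2 N)
      (by
        have := M0_le_N S
        have h2 : (2:ℕ) ^ (Nat.clog 2 N + 1) = 2 * 2 ^ Nat.clog 2 N := by rw [pow_succ]; ring
        have h3 : 0 < 2 ^ Nat.clog 2 N := pow_pos (by norm_num) _
        omega)
      (by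
        have h2 : (2:ℕ) ^ (Nat.clog 2 N + 1) = 2 * 2 ^ Nat.clog 2 N := by rw [pow_succ]; ring
        have : 0 < 2 ^ Nat.clog 2 N := pow_pos (by norm_num) _
        omega)
    obtain ⟨hp, hq⟩ := hval
    simp only [pPred, Bool.and_eq_true, decide_eq_true_eq] at hp
    simp only [qPred, decide_eq_true_eq] at hq
    refine ⟨⟨go (pPred N S) (qPred S) (Nat.clog 2 N + 1) (2 ^ Nat.clog 2 N), hp.2, rfl⟩,
      fun g hg => ?_⟩
    show empLoss (thrFn N (go (pPred N S) (qPred S) (Nat.clog 2 N + 1) (2 ^ Nat.clog 2 N))) S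
      ≤ empLoss g S
    rw [empLoss_thr, hp.1, hq]
    exact Nat.zero_le _
  · -- unlearning consistency
    intro I
    have htr_le : ∀ i, eSq N S i < 2 ^ (Nat.clog 2 n + 1) := by
      intro i
      have h1 := trace_le (pPred N S) (qPred S) S (Nat.clog 2 N + 1) (2 ^ Nat.clog 2 N) (i / 2)
      unfold eSq
      split <;> omega
    have hXlt : bigX N n S < 2 ^ (2 * ((Nat.clog 2 N + 1) * (Nat.clog 2 n + 1))) := by
      have h1 : bigX N n S < (2 ^ (Nat.clog 2 n + 1)) ^ (2 * (Nat.clog 2 N + 1)) :=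
        recE_lt _ (by omega) _ _ (fun i _ => htr_le i)
      have h2 : ((2:ℕ) ^ (Nat.clog 2 n + 1)) ^ (2 * (Nat.clog 2 N + 1))
          = 2 ^ (2 * ((Nat.clog 2 N + 1) * (Nat.clog 2 n + 1))) := by
        rw [← pow_mul]
        congr 1
        ring
      omega
    have hXrec : recX (2 * ((Nat.clog 2 N + 1) * (Nat.clog 2 n + 1)))
        (fun i => if h : i < 2 * ((Nat.clog 2 N + 1) * (Nat.clog 2 n + 1)) then
          (LearnF N n S).2 ⟨i, h⟩ else false) = bigX N n S := by
      rw [recX_congr _ _ (fun i => decide ((bigX N n S / 2 ^ i) % 2 = 1))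
        (fun i hi => by simp [LearnF, dif_pos hi])]
      exact recX_bits _ _ hXlt
    have hdig : ∀ j, j < Nat.clog 2 N + 1 →
        ((bigX N n S / (2 ^ (Nat.clog 2 n + 1)) ^ (2*j)) % 2 ^ (Nat.clog 2 n + 1),
         (bigX N n S / (2 ^ (Nat.clog 2 n + 1)) ^ (2*j+1)) % 2 ^ (Nat.clog 2 n + 1))
        = trace (pPred N S) (qPred S) (cT S) (cF S) (Nat.clog 2 N + 1) (2 ^ Nat.clog 2 N) j := by
      intro j hj
      have h1 := recE_digit _ hq1 (2 * (Nat.clog 2 N + 1)) (eSq N S)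
        (fun i _ => htr_le i) (2*j) (by omega)
      have h2 := recE_digit _ hq1 (2 * (Nat.clog 2 N + 1)) (eSq N S)
        (fun i _ => htr_le i) (2*j+1) (by omega)
      have he1 : eSq N S (2*j) =
          (trace (pPred N S) (qPred S) (cT S) (cF S) (Nat.clog 2 N + 1) (2 ^ Nat.clog 2 N) j).1 := by
        unfold eSq
        rw [if_pos (by omega), Nat.mul_div_cancel_left j (by norm_num)]
      have he2 : eSq N S (2*j+1) =
          (trace (pPred N S) (qPred S) (cT S) (cF S) (Nat.clog 2 N + 1) (2 ^ Nat.clog 2 N) j).2 := by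
        unfold eSq
        rw [if_neg (by omega), show (2*j+1)/2 = j from by omega]
      rw [show bigX N n S = recE (2 ^ (Nat.clog 2 n + 1)) (2 * (Nat.clog 2 N + 1)) (eSq N S)
        from rfl, h1, h2, he1, he2]
    have hsplitT : ∀ m, cT S m = cT (surviving S I) m + cT (removedList S I) m := fun m =>
      countP_split (fun z : Fin N × Bool => z.2 && decide ((z.1 : ℕ) < m)) S I
    have hsplitF : ∀ m, cF S m = cF (surviving S I) m + cF (removedList S I) m := fun m =>
      countP_split (fun z : Fin N × Bool => !z.2 && decide (m ≤ (z.1 : ℕ))) S I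
    have hP : ∀ m, (decide (cT S m = cT (removedList S I) m) && decide (m ≤ N))
        = pPred N (surviving S I) m := by
      intro m
      have := hsplitT m
      unfold pPred
      congr 1
      exact decide_eq_decide.mpr (by omega)
    have hQ : ∀ m, (decide (cF S m = cF (removedList S I) m)) = qPred (surviving S I) m := by
      intro m
      have := hsplitF m
      unfold qPred
      exact decide_eq_decide.mpr (by omega)
    have h3 : ∀ m, pPred N S m = true → qPred S m = true →
        pPred N (surviving S I) m = true ∧ qPred (surviving S I) m = true := by
      intro m hp hq
      simp only [pPred, qPred, Bool.and_eq_true, decide_eq_true_eq] at *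
      have h1 := hsplitT m
      have h2 := hsplitF m
      exact ⟨⟨by omega, hp.2⟩, by omega⟩
    have h1 : ∀ m, qPred (surviving S I) m = false → qPred S m = false := by
      intro m hm
      simp only [qPred, decide_eq_false_iff_not] at *
      have := hsplitF m
      omega
    have h2 : ∀ m, pPred N (surviving S I) m = false → pPred N S m = false := by
      intro m hm
      simp only [pPred, Bool.and_eq_false_iff, decide_eq_false_iff_not] at *
      have := hsplitT m
      rcases hm with hm | hm
      · left; omega
      · right; omega
    have h4 : ∀ m, qPred S m = false → pPred N (surviving S I) m = true := by
      intro m hm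
      have hm0 := qPred_false hm
      have hmN : m < M1 N S := by omega
      simp only [pPred, Bool.and_eq_true, decide_eq_true_eq]
      refine ⟨cT_eq_zero fun z hz hzt => ?_, by have := M1_le_N S; omega⟩
      have := M1_le_of_true (mem_of_mem_surviving hz) hzt
      omega
    show thrFn N (replay (cT (removedList S I)) (cF (removedList S I)) N
        (fun j => ((recX (2 * ((Nat.clog 2 N + 1) * (Nat.clog 2 n + 1)))
          (fun i => if h : i < 2 * ((Nat.clog 2 N + 1) * (Nat.clog 2 n + 1)) then
            (LearnF N n S).2 ⟨i, h⟩ else false) / (2 ^ (Nat.clog 2 n + 1)) ^ (2*j))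
              % 2 ^ (Nat.clog 2 n + 1),
          (recX (2 * ((Nat.clog 2 N + 1) * (Nat.clog 2 n + 1)))
          (fun i => if h : i < 2 * ((Nat.clog 2 N + 1) * (Nat.clog 2 n + 1)) then
            (LearnF N n S).2 ⟨i, h⟩ else false) / (2 ^ (Nat.clog 2 n + 1)) ^ (2*j+1))
              % 2 ^ (Nat.clog 2 n + 1)))
        (Nat.clog 2 N + 1) (2 ^ Nat.clog 2 N)) = (LearnF N n (surviving S I)).1
    rw [hXrec]
    rw [replay_congr (cT (removedList S I)) (cF (removedList S I)) N (Nat.clog 2 N + 1) _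
      (trace (pPred N S) (qPred S) (cT S) (cF S) (Nat.clog 2 N + 1) (2 ^ Nat.clog 2 N))
      (2 ^ Nat.clog 2 N) (fun j hj => hdig j hj)]
    rw [replay_eq_go (pPred N S) (qPred S) (pPred N (surviving S I)) (qPred (surviving S I))
      (cT S) (cF S) (cT (removedList S I)) (cF (removedList S I)) N hP hQ h3 h1 h2 h4
      (Nat.clog 2 N + 1) (2 ^ Nat.clog 2 N)]
    rfl
end

section
/- Any (central, non-ticketed) learning–unlearning scheme for the class H_pt of point functions, even one required to be valid only for H_pt-realizable datasets, must have space complexity Ω(|X|) once the dataset size is allowed to be Ω(|X|): there exists a constant c > 0 such that for every finite X = {1, …, m+1}, any LU scheme for H_pt over X that is valid for all H_pt-realizable datasets of size at most 2m must have auxiliary information of at least c · m bits. -/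
namespace PFLB


variable {Z : Type}

lemma filter_map_get_cons (a : Z) (S' : List Z) (p : Fin (S'.length + 1) → Bool) :
    ((List.finRange (S'.length + 1)).filter p).map (a :: S').get
      = (if p 0 then [a] else []) ++
        ((List.finRange S'.length).filter (fun i => p i.succ)).map S'.get := by
  rw [List.finRange_succ, List.filter_cons]
  cases h : p 0 <;>
    simp [h, List.filter_map, List.map_map, Function.comp_def]

lemma removedList_empty (S : List Z) : removedList S (∅ : Finset (Fin S.length)) = [] := by
  simp [removedList]

lemma surviving_empty (S : List Z) : surviving S (∅ : Finset (Fin S.length)) = S := by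
  simp [surviving, List.map_get_finRange]

lemma exists_single_removal (S P Q : List Z) (z : Z) (hS : S = P ++ z :: Q) :
    ∃ I : Finset (Fin S.length), removedList S I = [z] ∧ surviving S I = P ++ Q := by
  subst hS
  induction P with
  | nil =>
      simp only [List.nil_append]
      refine ⟨{⟨0, Nat.succ_pos _⟩}, ?_, ?_⟩
      · refine (filter_map_get_cons z Q _).trans ?_
        rw [if_pos (by simp)]
        have : ∀ i ∈ List.finRange Q.length,
            (decide (i.succ ∈ ({⟨0, Nat.succ_pos _⟩} : Finset (Fin (Q.length+1)))))
              = (fun (_ : Fin Q.length) => false) i := by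
          intro i _
          simp [Fin.ext_iff]
        rw [List.filter_congr this]
        simp
      · refine (filter_map_get_cons z Q _).trans ?_
        rw [if_neg (by simp)]
        have : ∀ i ∈ List.finRange Q.length,
            (decide (i.succ ∉ ({⟨0, Nat.succ_pos _⟩} : Finset (Fin (Q.length+1)))))
              = (fun (_ : Fin Q.length) => true) i := by
          intro i _
          simp [Fin.ext_iff]
        rw [List.filter_congr this]
        simp [List.map_get_finRange]
  | cons a P ih =>
      obtain ⟨I, hrem, hsurv⟩ := ih
      refine ⟨I.map ⟨Fin.succ, Fin.succ_injective _⟩, ?_, ?_⟩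
      · refine (filter_map_get_cons a (P ++ z :: Q) _).trans ?_
        rw [if_neg (by
              simp only [decide_eq_true_eq, Finset.mem_map]
              rintro ⟨x, -, hx⟩
              exact Fin.succ_ne_zero x hx)]
        have : ∀ i ∈ List.finRange (P ++ z :: Q).length,
            (decide (i.succ ∈ I.map ⟨Fin.succ, Fin.succ_injective _⟩))
              = (fun i => decide (i ∈ I)) i := by
          intro i _
          simp [Finset.mem_map, Fin.succ_inj]
        rw [List.filter_congr this]
        simpa [removedList] using hrem
      · refine (filter_map_get_cons a (P ++ z :: Q) _).trans ?_
        rw [if_pos (by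
              simp only [decide_not, Bool.not_eq_true', decide_eq_false_iff_not, Finset.mem_map]
              rintro ⟨x, -, hx⟩
              exact Fin.succ_ne_zero x hx)]
        have : ∀ i ∈ List.finRange (P ++ z :: Q).length,
            (decide (i.succ ∉ I.map ⟨Fin.succ, Fin.succ_injective _⟩))
              = (fun i => decide (i ∉ I)) i := by
          intro i _
          simp [Finset.mem_map, Fin.succ_inj]
        rw [List.filter_congr this]
        have := hsurv
        simp only [surviving, decide_not] at this
        simp [this]



variable {N : ℕ}

lemma pointFn_inj {a b : Fin N} (h : pointFn a = pointFn b) : a = b := by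
  have := congrFun h a
  simp [pointFn] at this
  exact this

def flist (A : Finset (Fin N)) : List (Fin N × Bool) :=
  (A.sort (· ≤ ·)).map (fun x => (x, false))

def dl (A B : Finset (Fin N)) : List (Fin N × Bool) := flist A ++ flist B

lemma length_dl (A B : Finset (Fin N)) : (dl A B).length = A.card + B.card := by
  simp [dl, flist]

lemma mem_flist {A : Finset (Fin N)} {z : Fin N × Bool} :
    z ∈ flist A ↔ z.1 ∈ A ∧ z.2 = false := by
  constructor
  · rintro hz
    simp only [flist, List.mem_map] at hz
    obtain ⟨y, hy, rfl⟩ := hz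
    exact ⟨by simpa using hy, rfl⟩
  · rintro ⟨h1, h2⟩
    simp only [flist, List.mem_map]
    exact ⟨z.1, by simpa using h1, by rw [← h2]⟩

lemma mem_dl {A B : Finset (Fin N)} {z : Fin N × Bool} :
    z ∈ dl A B ↔ (z.1 ∈ A ∨ z.1 ∈ B) ∧ z.2 = false := by
  simp only [dl, List.mem_append, mem_flist]
  tauto

lemma empLoss_eq_zero_iff (h : Fin N → Bool) (L : List (Fin N × Bool)) :
    empLoss h L = 0 ↔ ∀ z ∈ L, h z.1 = z.2 := by
  rw [empLoss, List.sum_eq_zero_iff]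
  constructor
  · intro H z hz
    have := H _ (List.mem_map_of_mem hz)
    by_cases hc : h z.1 = z.2
    · exact hc
    · simp [hc] at this
  · intro H x hx
    obtain ⟨z, hz, rfl⟩ := List.mem_map.mp hx
    simp [H z hz]

lemma empLoss_pointFn_dl {A B : Finset (Fin N)} {a : Fin N} :
    empLoss (pointFn a) (dl A B) = 0 ↔ a ∉ A ∧ a ∉ B := by
  rw [empLoss_eq_zero_iff]
  constructor
  · intro H
    constructor
    · intro ha
      have := H (a, false) (mem_dl.mpr ⟨Or.inl ha, rfl⟩)
      simp [pointFn] at this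
    · intro ha
      have := H (a, false) (mem_dl.mpr ⟨Or.inr ha, rfl⟩)
      simp [pointFn] at this
  · rintro ⟨h1, h2⟩ z hz
    obtain ⟨hmem, hfalse⟩ := mem_dl.mp hz
    rw [hfalse]
    simp only [pointFn, decide_eq_false_iff_not]
    rintro rfl
    cases hmem with
    | inl h => exact h1 h
    | inr h => exact h2 h

lemma realizable_dl {A B : Finset (Fin N)} {c : Fin N} (h1 : c ∉ A) (h2 : c ∉ B) :
    IsRealizable (Hpt N) (dl A B) :=
  ⟨pointFn c, ⟨c, rfl⟩, empLoss_pointFn_dl.mpr ⟨h1, h2⟩⟩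

lemma erm_dl {A B : Finset (Fin N)} {c : Fin N} (h1 : c ∉ A) (h2 : c ∉ B)
    {h : Fin N → Bool} (hh : h ∈ ERM (Hpt N) (dl A B)) :
    ∃ a, h = pointFn a ∧ a ∉ A ∧ a ∉ B := by
  obtain ⟨⟨a, rfl⟩, hmin⟩ := hh
  refine ⟨a, rfl, ?_⟩
  have := hmin (pointFn c) ⟨c, rfl⟩
  rw [empLoss_pointFn_dl.mpr ⟨h1, h2⟩, Nat.le_zero] at this
  exact empLoss_pointFn_dl.mp this

lemma sort_erase (A : Finset (Fin N)) (x : Fin N) :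
    (A.sort (· ≤ ·)).erase x = (A.erase x).sort (· ≤ ·) := by
  refine (fun h1 h2 h3 => List.Perm.eq_of_pairwise' (r := fun a b : Fin N => a ≤ b) h2 h3 h1) ?_ ?_ ?_
  · rw [← Multiset.coe_eq_coe, ← Multiset.coe_erase, Finset.sort_eq, Finset.sort_eq,
      Finset.erase_val]
  · exact List.Pairwise.sublist (List.erase_sublist (a := x)) (Finset.pairwise_sort _ _)
  · exact Finset.pairwise_sort _ _

lemma flist_erase (A : Finset (Fin N)) (x : Fin N) :
    (flist A).erase (x, false) = flist (A.erase x) := by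
  have key : ∀ (l : List (Fin N)),
      (l.map (fun y => (y, false))).erase (x, false) = (l.erase x).map (fun y => (y, false)) := by
    intro l
    induction l with
    | nil => rfl
    | cons a l ih =>
        by_cases hax : a = x
        · subst hax
          simp [List.erase_cons]
        · simp [List.erase_cons, hax, ih, Prod.ext_iff]
  simp only [flist]
  rw [key, sort_erase]


section Main

variable {m cs : ℕ}
variable (Learn : List (Fin (m + 1) × Bool) → (Fin (m + 1) → Bool) × (Fin cs → Bool))
variable (Unlearn : List (Fin (m + 1) × Bool) → (Fin cs → Bool) → (Fin (m + 1) → Bool))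

/-- The scheme-validity hypothesis. -/
def Hyp : Prop :=
  ∀ S : List (Fin (m + 1) × Bool), S.length ≤ 2 * m →
    IsRealizable (Hpt (m + 1)) S →
    (Learn S).1 ∈ ERM (Hpt (m + 1)) S ∧
    ∀ I : Finset (Fin S.length),
      Unlearn (removedList S I) (Learn S).2 = (Learn (surviving S I)).1

variable {Learn} {Unlearn}

lemma card_G (i : Fin (m + 1)) : (Finset.univ.erase i).card = m := by
  rw [Finset.card_erase_of_mem (Finset.mem_univ i), Finset.card_univ, Fintype.card_fin]
  omega

lemma forced_singleton (hyp : Hyp Learn Unlearn) (i : Fin (m + 1))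
    (B : Finset (Fin (m + 1))) (hB : B ⊆ Finset.univ.erase i) :
    (Learn (dl (Finset.univ.erase i) B)).1 = pointFn i := by
  have hiG : i ∉ Finset.univ.erase i := Finset.notMem_erase i _
  have hiB : i ∉ B := fun h => hiG (hB h)
  have hlen : (dl (Finset.univ.erase i) B).length ≤ 2 * m := by
    rw [length_dl]
    have h1 : (Finset.univ.erase i).card = m := card_G i
    have h2 : B.card ≤ m := by
      have := Finset.card_le_card hB
      rwa [h1] at this
    omega
  obtain ⟨a, hLa, haG, -⟩ := erm_dl hiG hiB (hyp _ hlen (realizable_dl hiG hiB)).1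
  have hai : a = i := by
    by_contra hne
    exact haG (Finset.mem_erase.mpr ⟨hne, Finset.mem_univ a⟩)
  rw [hLa, hai]

lemma forced_pair (hyp : Hyp Learn Unlearn) (i x : Fin (m + 1))
    (U : Finset (Fin (m + 1))) (hU : U ⊆ (Finset.univ.erase i).erase x) :
    (Learn (dl ((Finset.univ.erase i).erase x) U)).1 = pointFn i ∨
    (Learn (dl ((Finset.univ.erase i).erase x) U)).1 = pointFn x := by
  have hiE : i ∉ (Finset.univ.erase i).erase x := fun h =>
    Finset.notMem_erase i _ (Finset.mem_of_mem_erase h)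
  have hiU : i ∉ U := fun h => hiE (hU h)
  have hlen : (dl ((Finset.univ.erase i).erase x) U).length ≤ 2 * m := by
    rw [length_dl]
    have h1 : ((Finset.univ.erase i).erase x).card ≤ m :=
      le_trans (Finset.card_le_card (Finset.erase_subset _ _)) (le_of_eq (card_G i))
    have h2 : U.card ≤ m := le_trans (Finset.card_le_card hU) h1
    omega
  obtain ⟨a, hLa, haE, -⟩ := erm_dl hiE hiU (hyp _ hlen (realizable_dl hiE hiU)).1
  have : a = x ∨ a = i := by
    by_contra hcon
    push_neg at hcon
    exact haE (Finset.mem_erase.mpr ⟨hcon.1,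
      Finset.mem_erase.mpr ⟨hcon.2, Finset.mem_univ a⟩⟩)
  rcases this with h | h
  · right; rw [hLa, h]
  · left; rw [hLa, h]

lemma conflict (hyp : Hyp Learn Unlearn) {i x : Fin (m + 1)}
    {T T₀ : Finset (Fin (m + 1))}
    (hT : T ⊆ Finset.univ.erase i) (hT₀ : T₀ ⊆ Finset.univ.erase i)
    (hxT : x ∈ T) (hxT₀ : x ∉ T₀) (hxi : x ∈ Finset.univ.erase i)
    (hpX : (Learn (dl ((Finset.univ.erase i).erase x) T₀)).1 = pointFn x) :
    (Learn (dl (Finset.univ.erase i) T)).2 ≠ (Learn (dl (Finset.univ.erase i) T₀)).2 := by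
  intro heq
  set G := Finset.univ.erase i with hG
  have hiG : i ∉ G := Finset.notMem_erase i _
  have hcardG : G.card = m := card_G i
  -- first dataset : remove one of the two copies of x (the one in `flist T`)
  have hmemT : ((x, false) : Fin (m + 1) × Bool) ∈ flist T := mem_flist.mpr ⟨hxT, rfl⟩
  obtain ⟨l₁, l₂, -, hdec, hrest⟩ := List.exists_erase_eq hmemT
  have hS1 : dl G T = (flist G ++ l₁) ++ ((x, false) :: l₂) := by
    rw [dl, hdec, ← List.append_assoc]
  obtain ⟨I₁, hrem₁, hsurv₁⟩ := exists_single_removal _ _ _ _ hS1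
  have hlen1 : (dl G T).length ≤ 2 * m := by
    rw [length_dl]
    have h2 : T.card ≤ m := by
      have := Finset.card_le_card hT
      rwa [hcardG] at this
    omega
  have hiT : i ∉ T := fun h => hiG (hT h)
  have hUn1 := (hyp _ hlen1 (realizable_dl hiG hiT)).2 I₁
  rw [hrem₁, hsurv₁] at hUn1
  have hsurv_eq : (flist G ++ l₁) ++ l₂ = dl G (T.erase x) := by
    rw [List.append_assoc, ← hrest, flist_erase]
    rfl
  rw [hsurv_eq] at hUn1
  rw [forced_singleton hyp i (T.erase x)
    (fun y hy => hT (Finset.mem_of_mem_erase hy))] at hUn1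
  -- second dataset : remove the unique copy of x (inside `flist G`)
  have hmemG : ((x, false) : Fin (m + 1) × Bool) ∈ flist G := mem_flist.mpr ⟨hxi, rfl⟩
  obtain ⟨l₁', l₂', -, hdec', hrest'⟩ := List.exists_erase_eq hmemG
  have hS2 : dl G T₀ = l₁' ++ ((x, false) :: (l₂' ++ flist T₀)) := by
    rw [dl, hdec', List.append_assoc]
    rfl
  obtain ⟨I₂, hrem₂, hsurv₂⟩ := exists_single_removal _ _ _ _ hS2
  have hlen2 : (dl G T₀).length ≤ 2 * m := by
    rw [length_dl]
    have h2 : T₀.card ≤ m := by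
      have := Finset.card_le_card hT₀
      rwa [hcardG] at this
    omega
  have hiT₀ : i ∉ T₀ := fun h => hiG (hT₀ h)
  have hUn2 := (hyp _ hlen2 (realizable_dl hiG hiT₀)).2 I₂
  rw [hrem₂, hsurv₂] at hUn2
  have hsurv_eq2 : l₁' ++ (l₂' ++ flist T₀) = dl (G.erase x) T₀ := by
    rw [← List.append_assoc, ← hrest', flist_erase]
    rfl
  rw [hsurv_eq2, hpX] at hUn2
  rw [heq, hUn2] at hUn1
  exact (Finset.mem_erase.mp hxi).1 (pointFn_inj hUn1)

end Main


section Counting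

variable {m cs : ℕ}
variable {Learn : List (Fin (m + 1) × Bool) → (Fin (m + 1) → Bool) × (Fin cs → Bool)}
variable {Unlearn : List (Fin (m + 1) × Bool) → (Fin cs → Bool) → (Fin (m + 1) → Bool)}

/-- `x` beats `i` on background `U`. -/
def pX (Learn : List (Fin (m + 1) × Bool) → (Fin (m + 1) → Bool) × (Fin cs → Bool))
    (i x : Fin (m + 1)) (U : Finset (Fin (m + 1))) : Prop :=
  (Learn (dl ((Finset.univ.erase i).erase x) U)).1 = pointFn x

instance pX_dec (Learn : List (Fin (m + 1) × Bool) → (Fin (m + 1) → Bool) × (Fin cs → Bool))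
    (i x : Fin (m + 1)) (U : Finset (Fin (m + 1))) : Decidable (pX Learn i x U) := by
  unfold pX; infer_instance

def DD (Learn : List (Fin (m + 1) × Bool) → (Fin (m + 1) → Bool) × (Fin cs → Bool))
    (i : Fin (m + 1)) (U : Finset (Fin (m + 1))) : Finset (Fin (m + 1)) :=
  ((Finset.univ.erase i) \ U).filter (fun x => pX Learn i x U)

def W2 (Learn : List (Fin (m + 1) × Bool) → (Fin (m + 1) → Bool) × (Fin cs → Bool))
    (i x : Fin (m + 1)) : ℕ :=
  (((Finset.univ.erase i).erase x).powerset.filter (fun U => pX Learn i x U)).card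

def WW (Learn : List (Fin (m + 1) × Bool) → (Fin (m + 1) → Bool) × (Fin cs → Bool))
    (i : Fin (m + 1)) : ℕ :=
  ∑ U ∈ (Finset.univ.erase i).powerset, (DD Learn i U).card

lemma card_Exc {i x : Fin (m + 1)} (hix : x ≠ i) :
    ((Finset.univ.erase i).erase x).card = m - 1 := by
  rw [Finset.card_erase_of_mem
    (Finset.mem_erase.mpr ⟨hix, Finset.mem_univ x⟩), card_G]

lemma stepA (i : Fin (m + 1)) :
    WW Learn i = ∑ x ∈ Finset.univ.erase i, W2 Learn i x := by
  calc WW Learn i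
      = ∑ U ∈ (Finset.univ.erase i).powerset,
          ∑ x ∈ (Finset.univ.erase i) \ U, (if pX Learn i x U then 1 else 0) :=
        Finset.sum_congr rfl fun U _ => Finset.card_filter _ _
    _ = ∑ U ∈ (Finset.univ.erase i).powerset,
          ∑ x ∈ Finset.univ.erase i,
            (if x ∉ U then (if pX Learn i x U then 1 else 0) else 0) := by
        refine Finset.sum_congr rfl fun U _ => ?_
        rw [Finset.sdiff_eq_filter, Finset.sum_filter]
    _ = ∑ x ∈ Finset.univ.erase i,
          ∑ U ∈ (Finset.univ.erase i).powerset,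
            (if x ∉ U then (if pX Learn i x U then 1 else 0) else 0) := Finset.sum_comm
    _ = ∑ x ∈ Finset.univ.erase i, W2 Learn i x := by
        refine Finset.sum_congr rfl fun x _ => ?_
        rw [← Finset.sum_filter]
        have hps : (Finset.univ.erase i).powerset.filter (fun U => x ∉ U)
            = ((Finset.univ.erase i).erase x).powerset := by
          ext U
          simp only [Finset.mem_filter, Finset.mem_powerset, Finset.subset_erase]
        rw [hps, W2]
        exact (Finset.card_filter _ _).symm

lemma stepB (hyp : Hyp Learn Unlearn) {i x : Fin (m + 1)} (hix : i ≠ x) :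
    W2 Learn i x + W2 Learn x i = 2 ^ (m - 1) := by
  have hE : (Finset.univ.erase x).erase i = (Finset.univ.erase i).erase x :=
    Finset.erase_right_comm
  have hcongr : (((Finset.univ.erase x).erase i).powerset.filter
        (fun U => pX Learn x i U)).card
      = (((Finset.univ.erase i).erase x).powerset.filter
        (fun U => ¬ pX Learn i x U)).card := by
    simp only [pX, hE]
    congr 1
    refine Finset.filter_congr fun U hU => ?_
    have hUsub := Finset.mem_powerset.mp hU
    constructor
    · intro h1 h2
      rw [h1] at h2
      exact hix (pointFn_inj h2)
    · intro h1
      rcases forced_pair hyp i x U hUsub with h | h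
      · exact h
      · exact absurd h h1
  rw [W2, W2, hcongr, Finset.card_filter_add_card_filter_not,
    Finset.card_powerset, card_Exc (fun h => hix h.symm)]

lemma swap_sum (g : Fin (m + 1) → Fin (m + 1) → ℕ) :
    ∑ i : Fin (m + 1), ∑ x ∈ Finset.univ.erase i, g i x
      = ∑ i : Fin (m + 1), ∑ x ∈ Finset.univ.erase i, g x i := by
  have h : ∀ g : Fin (m + 1) → Fin (m + 1) → ℕ,
      ∑ i : Fin (m + 1), ∑ x ∈ Finset.univ.erase i, g i x
        = ∑ i : Fin (m + 1), ∑ x : Fin (m + 1), if x ≠ i then g i x else 0 := by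
    intro g
    refine Finset.sum_congr rfl fun i _ => ?_
    rw [← Finset.filter_ne', Finset.sum_filter]
  rw [h g, h (fun i x => g x i), Finset.sum_comm]
  refine Finset.sum_congr rfl fun x _ => Finset.sum_congr rfl fun i _ => ?_
  exact if_congr ne_comm rfl rfl

lemma stepC (hyp : Hyp Learn Unlearn) (hm : 2 ≤ m) :
    ∃ i : Fin (m + 1), m * 2 ^ (m - 2) ≤ WW Learn i := by
  by_contra hcon
  push_neg at hcon
  set K := m * 2 ^ (m - 2) with hK
  have hKpos : 1 ≤ K := by
    have : (0:ℕ) < 2 ^ (m - 2) := Nat.pow_pos (by norm_num)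
    have : 0 < m * 2 ^ (m - 2) := Nat.mul_pos (by omega) this
    omega
  set SS := ∑ i : Fin (m + 1), WW Learn i with hSS
  have hdouble : SS + SS = (m + 1) * (2 * K) := by
    have h1 : SS = ∑ i : Fin (m + 1), ∑ x ∈ Finset.univ.erase i, W2 Learn i x :=
      Finset.sum_congr rfl fun i _ => stepA i
    have h2 : SS = ∑ i : Fin (m + 1), ∑ x ∈ Finset.univ.erase i, W2 Learn x i := by
      rw [h1, swap_sum]
    have h3 : SS + SS
        = ∑ i : Fin (m + 1), ∑ x ∈ Finset.univ.erase i,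
            (W2 Learn i x + W2 Learn x i) := by
      calc SS + SS
          = (∑ i : Fin (m + 1), ∑ x ∈ Finset.univ.erase i, W2 Learn i x)
            + (∑ i : Fin (m + 1), ∑ x ∈ Finset.univ.erase i, W2 Learn x i) := by
            rw [← h1, ← h2]
        _ = ∑ i : Fin (m + 1), ∑ x ∈ Finset.univ.erase i,
              (W2 Learn i x + W2 Learn x i) := by
            rw [← Finset.sum_add_distrib]
            refine Finset.sum_congr rfl fun i _ => ?_
            rw [← Finset.sum_add_distrib]
    rw [h3]
    have h4 : ∀ i : Fin (m + 1), ∑ x ∈ Finset.univ.erase i,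
        (W2 Learn i x + W2 Learn x i) = m * 2 ^ (m - 1) := by
      intro i
      have : ∀ x ∈ Finset.univ.erase i, W2 Learn i x + W2 Learn x i = 2 ^ (m - 1) := by
        intro x hx
        exact stepB hyp (fun h => (Finset.mem_erase.mp hx).1 h.symm)
      rw [Finset.sum_congr rfl this, Finset.sum_const, card_G, smul_eq_mul]
    rw [Finset.sum_congr rfl fun i _ => h4 i, Finset.sum_const, Finset.card_univ,
      Fintype.card_fin, smul_eq_mul]
    have h5 : 2 * K = m * 2 ^ (m - 1) := by
      rw [hK]
      have h6 : m - 1 = (m - 2) + 1 := by omega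
      rw [h6, pow_succ]
      ring
    rw [h5]
  have hless : SS ≤ (m + 1) * (K - 1) := by
    rw [hSS]
    calc ∑ i : Fin (m + 1), WW Learn i ≤ ∑ _i : Fin (m + 1), (K - 1) :=
          Finset.sum_le_sum fun i _ => Nat.le_pred_of_lt (hcon i)
      _ = (m + 1) * (K - 1) := by
          rw [Finset.sum_const, Finset.card_univ, Fintype.card_fin, smul_eq_mul]
  have h9 : (m + 1) * (2 * K) ≤ (m + 1) * (2 * (K - 1)) := by
    calc (m + 1) * (2 * K) = SS + SS := hdouble.symm
      _ ≤ (m + 1) * (K - 1) + (m + 1) * (K - 1) := Nat.add_le_add hless hless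
      _ = (m + 1) * (2 * (K - 1)) := by ring
  have h10 : 2 * K ≤ 2 * (K - 1) := Nat.le_of_mul_le_mul_left h9 (by omega)
  omega

theorem main_bound (hyp : Hyp Learn Unlearn) (hm : 2 ≤ m) : m / 8 ≤ cs + 3 := by
  obtain ⟨istar, histar⟩ := stepC hyp hm
  set d := m / 8 with hd
  set G := Finset.univ.erase istar with hGdef
  set GG := G.powerset.filter (fun U => d ≤ (DD Learn istar U).card) with hGG
  -- lower bound on GG.card
  have hDDsub : ∀ U : Finset (Fin (m + 1)), DD Learn istar U ⊆ G :=
    fun U => (Finset.filter_subset _ _).trans (Finset.sdiff_subset)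
  have hsplit : ∑ U ∈ GG, (DD Learn istar U).card
      + ∑ U ∈ G.powerset.filter (fun U => ¬ d ≤ (DD Learn istar U).card),
          (DD Learn istar U).card
      = WW Learn istar := by
    rw [WW, hGG]
    exact Finset.sum_filter_add_sum_filter_not _ _ _
  have hbound1 : ∑ U ∈ GG, (DD Learn istar U).card ≤ GG.card * m := by
    have := Finset.sum_le_card_nsmul GG (fun U => (DD Learn istar U).card) m
      (fun U _ => by
        have h1 := Finset.card_le_card (hDDsub U)
        rw [hGdef, card_G] at h1
        exact h1)
    simpa [smul_eq_mul] using this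
  have hbound2 : ∑ U ∈ G.powerset.filter (fun U => ¬ d ≤ (DD Learn istar U).card),
      (DD Learn istar U).card ≤ 2 ^ m * d := by
    calc ∑ U ∈ G.powerset.filter (fun U => ¬ d ≤ (DD Learn istar U).card),
        (DD Learn istar U).card
        ≤ (G.powerset.filter (fun U => ¬ d ≤ (DD Learn istar U).card)).card * d := by
          have := Finset.sum_le_card_nsmul
            (G.powerset.filter (fun U => ¬ d ≤ (DD Learn istar U).card))
            (fun U => (DD Learn istar U).card) d
            (fun U hU => by
              have h := (Finset.mem_filter.mp hU).2
              simp only [not_le] at h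
              exact le_of_lt h)
          simpa [smul_eq_mul] using this
      _ ≤ 2 ^ m * d := by
          have h1 : (G.powerset.filter (fun U => ¬ d ≤ (DD Learn istar U).card)).card
              ≤ 2 ^ m := by
            have h2 := Finset.card_le_card
              (Finset.filter_subset (fun U => ¬ d ≤ (DD Learn istar U).card) G.powerset)
            rwa [Finset.card_powerset, hGdef, card_G] at h2
          exact Nat.mul_le_mul_right _ h1
  have hKle : m * 2 ^ (m - 2) ≤ GG.card * m + 2 ^ m * d := by
    calc m * 2 ^ (m - 2) ≤ WW Learn istar := histar
      _ = _ + _ := hsplit.symm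
      _ ≤ GG.card * m + 2 ^ m * d := Nat.add_le_add hbound1 hbound2
  -- conclude 2^(m-2) ≤ 2 * GG.card
  have h8d : 8 * d ≤ m := by
    rw [hd]; omega
  have hpow : (2:ℕ) * 2 ^ m = 8 * 2 ^ (m - 2) := by
    have h6 : (m - 2) + 2 = m := by omega
    conv_lhs => rw [← h6]
    rw [pow_add]
    ring
  have hmain : 2 ^ (m - 2) ≤ 2 * GG.card := by
    have h1 : 2 * (m * 2 ^ (m - 2)) ≤ 2 * (GG.card * m) + 2 * (2 ^ m * d) := by omega
    have h2 : 2 * (2 ^ m * d) = (8 * d) * 2 ^ (m - 2) := by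
      calc 2 * (2 ^ m * d) = (2 * 2 ^ m) * d := by ring
        _ = (8 * 2 ^ (m - 2)) * d := by rw [hpow]
        _ = (8 * d) * 2 ^ (m - 2) := by ring
    have h3 : (8 * d) * 2 ^ (m - 2) ≤ m * 2 ^ (m - 2) :=
      Nat.mul_le_mul_right _ h8d
    have h4 : m * 2 ^ (m - 2) ≤ 2 * (GG.card * m) := by omega
    have h5 : m * 2 ^ (m - 2) ≤ m * (2 * GG.card) := by
      calc m * 2 ^ (m - 2) ≤ 2 * (GG.card * m) := h4
        _ = m * (2 * GG.card) := by ring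
    exact Nat.le_of_mul_le_mul_left h5 (by omega)
  -- upper bound on GG.card via fibers of the aux map
  have hfiber : ∀ a ∈ GG.image (fun T => (Learn (dl G T)).2),
      (GG.filter (fun T => (Learn (dl G T)).2 = a)).card ≤ 2 ^ (m - d) := by
    intro a ha
    obtain ⟨T₀, hT₀GG, hT₀a⟩ := Finset.mem_image.mp ha
    have hT₀G : T₀ ⊆ G := Finset.mem_powerset.mp (Finset.mem_filter.mp hT₀GG).1
    have hdT₀ : d ≤ (DD Learn istar T₀).card := (Finset.mem_filter.mp hT₀GG).2
    have hsub : GG.filter (fun T => (Learn (dl G T)).2 = a)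
        ⊆ (G \ DD Learn istar T₀).powerset := by
      intro T hT
      obtain ⟨hTGG, hTa⟩ := Finset.mem_filter.mp hT
      have hTG : T ⊆ G := Finset.mem_powerset.mp (Finset.mem_filter.mp hTGG).1
      rw [Finset.mem_powerset]
      intro y hy
      rw [Finset.mem_sdiff]
      refine ⟨hTG hy, ?_⟩
      intro hyD
      obtain ⟨hyGU, hypX⟩ := Finset.mem_filter.mp hyD
      obtain ⟨hyG, hyT₀⟩ := Finset.mem_sdiff.mp hyGU
      exact conflict hyp hTG hT₀G hy hyT₀ hyG hypX (hTa.trans hT₀a.symm)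
    calc (GG.filter (fun T => (Learn (dl G T)).2 = a)).card
        ≤ (G \ DD Learn istar T₀).powerset.card := Finset.card_le_card hsub
      _ = 2 ^ (G \ DD Learn istar T₀).card := Finset.card_powerset _
      _ = 2 ^ (m - (DD Learn istar T₀).card) := by
          rw [Finset.card_sdiff_of_subset (hDDsub T₀), hGdef, card_G]
      _ ≤ 2 ^ (m - d) := Nat.pow_le_pow_right (by norm_num)
          (Nat.sub_le_sub_left hdT₀ m)
  have himg : GG.card ≤ 2 ^ (m - d) * (GG.image (fun T => (Learn (dl G T)).2)).card :=
    Finset.card_le_mul_card_image GG _ hfiber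
  have himg2 : (GG.image (fun T => (Learn (dl G T)).2)).card ≤ 2 ^ cs := by
    have := Finset.card_le_univ (GG.image (fun T => (Learn (dl G T)).2))
    rwa [Fintype.card_fun, Fintype.card_bool, Fintype.card_fin] at this
  have hfinal : 2 ^ (m - 2) ≤ 2 ^ ((m - d) + cs + 1) := by
    calc 2 ^ (m - 2) ≤ 2 * GG.card := hmain
      _ ≤ 2 * (2 ^ (m - d) * 2 ^ cs) := by
          have h7 : 2 ^ (m - d) * (GG.image (fun T => (Learn (dl G T)).2)).card
              ≤ 2 ^ (m - d) * 2 ^ cs := Nat.mul_le_mul_left _ himg2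
          omega
      _ = 2 ^ ((m - d) + cs + 1) := by
          rw [pow_add, pow_add, pow_one]
          ring
  have hexp : m - 2 ≤ (m - d) + cs + 1 :=
    (Nat.pow_le_pow_iff_right (by norm_num)).mp hfinal
  have hdm : d ≤ m := by rw [hd]; omega
  omega

theorem base_bound (hyp : Hyp Learn Unlearn) (hm : 1 ≤ m) : 1 ≤ cs := by
  by_contra hcs
  have hcs0 : cs = 0 := by omega
  have hne : (0 : Fin (m + 1)) ≠ 1 := by
    intro h01
    have h := congrArg Fin.val h01
    rw [Fin.val_zero, Fin.val_one'] at h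
    rw [Nat.mod_eq_of_lt (by omega : 1 < m + 1)] at h
    exact absurd h (by omega)
  have hforced : ∀ j : Fin (m + 1),
      Unlearn [] (Learn (dl (Finset.univ.erase j) ∅)).2 = pointFn j := by
    intro j
    have hiG : j ∉ Finset.univ.erase j := Finset.notMem_erase j _
    have hlen : (dl (Finset.univ.erase j) (∅ : Finset (Fin (m+1)))).length ≤ 2 * m := by
      rw [length_dl, card_G, Finset.card_empty]
      omega
    have hun := (hyp _ hlen (realizable_dl hiG (Finset.notMem_empty j))).2 ∅
    rw [removedList_empty, surviving_empty] at hun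
    rw [hun]
    exact forced_singleton hyp j ∅ (Finset.empty_subset _)
  have hauxeq : (Learn (dl (Finset.univ.erase (0 : Fin (m+1))) ∅)).2
      = (Learn (dl (Finset.univ.erase (1 : Fin (m+1))) ∅)).2 := by
    funext z
    rw [hcs0] at z
    exact z.elim0
  have h0 := hforced 0
  have h1 := hforced 1
  rw [hauxeq, h1] at h0
  exact hne (pointFn_inj h0.symm)

end Counting

end PFLB


/-- **Theorem (space lower bound for central LU schemes for point functions).** There is a
constant `c > 0` such that for every `m ≥ 1`, over the domain `{1, …, m+1}`, any central
(non-ticketed) learning–unlearning scheme for the class of point functions which is valid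
for all realizable datasets of size at most `2m` must use auxiliary information of at least
`c · m` bits. -/
theorem point_functions_central_lb :
    ∃ c : ℝ, 0 < c ∧
      ∀ m : ℕ, 1 ≤ m → ∀ cs : ℕ,
        (∃ (Learn : List (Fin (m + 1) × Bool) → (Fin (m + 1) → Bool) × (Fin cs → Bool))
           (Unlearn : List (Fin (m + 1) × Bool) → (Fin cs → Bool) → (Fin (m + 1) → Bool)),
           ∀ S : List (Fin (m + 1) × Bool), S.length ≤ 2 * m →
             IsRealizable (Hpt (m + 1)) S →
             (Learn S).1 ∈ ERM (Hpt (m + 1)) S ∧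
             ∀ I : Finset (Fin S.length),
               Unlearn (removedList S I) (Learn S).2 = (Learn (surviving S I)).1) →
        c * m ≤ (cs : ℝ) := by
  refine ⟨1 / 64, by norm_num, ?_⟩
  intro m hm cs hex
  obtain ⟨Learn, Unlearn, hscheme⟩ := hex
  have hyp : PFLB.Hyp Learn Unlearn := hscheme
  have hnat : m ≤ 64 * cs := by
    by_cases hbig : 64 ≤ m
    · have h1 := PFLB.main_bound hyp (by omega)
      omega
    · have h1 := PFLB.base_bound hyp hm
      omega
  have hreal : (m : ℝ) ≤ 64 * cs := by exact_mod_cast hnat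
  linarith
end
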